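/- arXiv:1411.7801 — 4 statements merged into one kernel-verified Lean document; each statement's English description precedes it below -/
import Mathlib

section
/- Assume a breakdown-free Arnoldi decomposition of length j, let Q̄_{j−1} ∈ ℂ^{j×j} be unitary with Q̄_{j−1} H̄_{j−1} = [R_{j−1}; 0_{1×(j−1)}] where R_{j−1} is upper triangular and invertible (for j = 1 take Q̄₀ = 1), let η_j be the (j,j) entry of diag(Q̄_{j−1}, 1)·H̄_j, and set c_j = |η_j|/√(|η_j|² + h_{j+1,j}²) and s_j = h_{j+1,j}/√(|η_j|² + h_{j+1,j}²) (the j-th Givens cosine and sine used in forming the QR factorization of H̄_j). If H_j is invertible, then x_j^{(G)} = c_j² x_j^{(F)} + s_j² x_{j−1}^{(G)}. -/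
open Matrix

noncomputable section

set_option maxHeartbeats 1000000

/-- Squared Euclidean norm of a complex vector. -/
def vnSq {m : Type*} [Fintype m] (v : m → ℂ) : ℝ := ∑ i, Complex.normSq (v i)

/-- Euclidean (2-)norm of a complex vector. -/
def vnorm {m : Type*} [Fintype m] (v : m → ℂ) : ℝ := Real.sqrt (vnSq v)

/-- The four Moore–Penrose conditions: `P` is the Moore-Penrose pseudoinverse of `M`. -/
def IsMoorePenrose {a b : Type*} [Fintype a] [Fintype b]
    (M : Matrix a b ℂ) (P : Matrix b a ℂ) : Prop :=
  M * P * M = M ∧ P * M * P = P ∧ (M * P)ᴴ = M * P ∧ (P * M)ᴴ = P * M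

/-- The Krylov subspace `K_i(A, r) = span {r, A r, …, A^(i-1) r}`. -/
def krylov {n : ℕ} (A : Matrix (Fin n) (Fin n) ℂ) (r : Fin n → ℂ) (i : ℕ) :
    Submodule ℂ (Fin n → ℂ) :=
  Submodule.span ℂ { v | ∃ k < i, v = (A ^ k) *ᵥ r }

/-- The first standard basis vector `e₁ ∈ ℂ^(m+1)`. -/
def e1 (m : ℕ) : Fin (m+1) → ℂ := fun i => if i = 0 then 1 else 0

/-- `y` is the unique minimizer of `‖t - M y'‖₂` over all `y'`. -/
def IsUniqueVecMin {a b : Type*} [Fintype a] [Fintype b]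
    (M : Matrix a b ℂ) (t : a → ℂ) (y : b → ℂ) : Prop :=
  (∀ y', vnSq (t - M *ᵥ y) ≤ vnSq (t - M *ᵥ y')) ∧
  ∀ y', (∀ y'', vnSq (t - M *ᵥ y') ≤ vnSq (t - M *ᵥ y'')) → y' = y

/-- A breakdown-free (single-vector) Arnoldi decomposition of length `j = q + 1`
for the linear system `A x = b` with initial guess `x₀`. -/
structure ArnoldiSV (n q : ℕ) : Type where
  A : Matrix (Fin n) (Fin n) ℂ
  b : Fin n → ℂ
  x0 : Fin n → ℂ
  V : Matrix (Fin n) (Fin (q+2)) ℂ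
  Hbar : Matrix (Fin (q+2)) (Fin (q+1)) ℂ
  hn : q + 2 ≤ n
  r0_ne : b - A *ᵥ x0 ≠ 0
  orth : Vᴴ * V = 1
  v1 : ∀ r, V r 0 = (b - A *ᵥ x0) r / (vnorm (b - A *ᵥ x0) : ℂ)
  span : ∀ i : ℕ, i ≤ q + 2 →
    krylov A (b - A *ᵥ x0) i =
      Submodule.span ℂ { v | ∃ c : Fin (q+2), (c : ℕ) < i ∧ v = fun r => V r c }
  arnoldi : A * V.submatrix id Fin.castSucc = V * Hbar
  hess : ∀ (r : Fin (q+2)) (c : Fin (q+1)), (c : ℕ) + 1 < (r : ℕ) → Hbar r c = 0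
  subdiag : ∀ k : Fin (q+1), 0 < (Hbar k.succ k).re ∧ (Hbar k.succ k).im = 0

namespace ArnoldiSV

variable {n q : ℕ}

/-- The initial residual `r₀ = b - A x₀`. -/
def r0 (D : ArnoldiSV n q) : Fin n → ℂ := D.b - D.A *ᵥ D.x0

/-- `β = ‖r₀‖₂`. -/
def beta (D : ArnoldiSV n q) : ℝ := vnorm D.r0

/-- `H̄_{j-1}`, the leading `j × (j-1)` submatrix of `H̄_j`. -/
def Hprev (D : ArnoldiSV n q) : Matrix (Fin (q+1)) (Fin q) ℂ :=
  D.Hbar.submatrix Fin.castSucc Fin.castSucc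

/-- `H_j`, the leading `j × j` submatrix of `H̄_j`. -/
def Hsq (D : ArnoldiSV n q) : Matrix (Fin (q+1)) (Fin (q+1)) ℂ :=
  D.Hbar.submatrix Fin.castSucc id

/-- `V_j = [v₁ … v_j]`. -/
def Vfull (D : ArnoldiSV n q) : Matrix (Fin n) (Fin (q+1)) ℂ :=
  D.V.submatrix id Fin.castSucc

/-- `V_{j-1} = [v₁ … v_{j-1}]`. -/
def Vprev (D : ArnoldiSV n q) : Matrix (Fin n) (Fin q) ℂ :=
  D.V.submatrix id fun i : Fin q => (i.castSucc.castSucc : Fin (q+2))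

end ArnoldiSV


lemma vnSq_nonneg' {m : Type*} [Fintype m] (v : m → ℂ) : 0 ≤ vnSq v :=
  Finset.sum_nonneg fun _ _ => Complex.normSq_nonneg _

lemma vnSq_add_of_orth' {m : Type*} [Fintype m] (r u : m → ℂ)
    (h : star u ⬝ᵥ r = 0) : vnSq (r + u) = vnSq r + vnSq u := by
  unfold vnSq
  simp only [Pi.add_apply]
  have h2 : (∑ i, Complex.normSq (r i + u i)) =
      ∑ i, (Complex.normSq (r i) + Complex.normSq (u i) + 2 * (r i * (starRingEnd ℂ) (u i)).re) := by
    refine Finset.sum_congr rfl fun i _ => ?_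
    exact Complex.normSq_add _ _
  rw [h2, Finset.sum_add_distrib, Finset.sum_add_distrib]
  have : ∑ i, 2 * (r i * (starRingEnd ℂ) (u i)).re = 0 := by
    have h3 : (∑ i, r i * (starRingEnd ℂ) (u i)) = 0 := by
      simpa [dotProduct, mul_comm] using h
    rw [← Finset.mul_sum, ← Complex.re_sum]
    rw [show (∑ i, (r i * (starRingEnd ℂ) (u i))) = 0 from h3]
    simp
  rw [this, add_zero]

lemma min_of_normal' {a b : Type*} [Fintype a] [Fintype b]
    (M : Matrix a b ℂ) (t : a → ℂ) (y : b → ℂ)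
    (h : Mᴴ *ᵥ (t - M *ᵥ y) = 0) :
    ∀ y', vnSq (t - M *ᵥ y) ≤ vnSq (t - M *ᵥ y') := by
  intro y'
  have key : t - M *ᵥ y' = (t - M *ᵥ y) + M *ᵥ (y - y') := by
    rw [Matrix.mulVec_sub]; abel
  have horth : star (M *ᵥ (y - y')) ⬝ᵥ (t - M *ᵥ y) = 0 := by
    rw [Matrix.star_mulVec, ← Matrix.dotProduct_mulVec, h, dotProduct_zero]
  rw [key, vnSq_add_of_orth' _ _ horth]
  have := vnSq_nonneg' (M *ᵥ (y - y'))
  linarith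

/-- The GMRES iterate is the convex combination
`x_j^(G) = c_j² x_j^(F) + s_j² x_{j-1}^(G)` of the FOM iterate and the previous
GMRES iterate, where `c_j, s_j` are the `j`-th Givens cosine and sine used in forming
the QR factorization of `H̄_j`, provided `H_j` is invertible. -/
theorem stmt1 {n q : ℕ} (D : ArnoldiSV n q)
    (yj : Fin (q+1) → ℂ) (hyj : IsUniqueVecMin D.Hbar (D.beta • e1 (q+1)) yj)
    (yprev : Fin q → ℂ) (hyprev : IsUniqueVecMin D.Hprev (D.beta • e1 q) yprev)
    (Qbar : Matrix (Fin (q+1)) (Fin (q+1)) ℂ) (R : Matrix (Fin q) (Fin q) ℂ)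
    (hQbar_unit : Qbarᴴ * Qbar = 1)
    (hQbar_base : q = 0 → Qbar = 1)
    (hR_ut : ∀ a b : Fin q, (b : ℕ) < (a : ℕ) → R a b = 0)
    (hR_inv : IsUnit R)
    (hqr_prev : Qbar * D.Hprev =
      Matrix.of fun (r : Fin (q+1)) (c : Fin q) => if h : (r : ℕ) < q then R ⟨r, h⟩ c else 0)
    (hHinv : IsUnit D.Hsq) :
    ∀ η : ℂ,
      η = ((Matrix.of fun (r c : Fin (q+2)) =>
              if hr : (r : ℕ) < q + 1 then
                (if hc : (c : ℕ) < q + 1 then Qbar ⟨r, hr⟩ ⟨c, hc⟩ else 0)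
              else if (c : ℕ) < q + 1 then 0 else 1) * D.Hbar)
            (⟨q, by omega⟩ : Fin (q+2)) (⟨q, by omega⟩ : Fin (q+1)) →
    ∀ hs : ℝ, hs = (D.Hbar (Fin.last (q+1)) (Fin.last q)).re →
    ∀ cj sj : ℝ,
      cj = ‖η‖ / Real.sqrt (‖η‖ ^ 2 + hs ^ 2) →
      sj = hs / Real.sqrt (‖η‖ ^ 2 + hs ^ 2) →
      D.x0 + D.Vfull *ᵥ yj
        = (cj ^ 2) • (D.x0 + D.Vfull *ᵥ (D.Hsq⁻¹ *ᵥ (D.beta • e1 q)))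
          + (sj ^ 2) • (D.x0 + D.Vprev *ᵥ yprev) := by
  intro eta heta hs hhs cj sj hcj hsj
  -- basic positivity facts
  have hsub := D.subdiag (Fin.last q)
  have hlast : (Fin.last q).succ = Fin.last (q+1) := by
    ext; simp [Fin.succ, Fin.last]
  have hhs0 : 0 < hs := by
    rw [hhs]; rw [hlast] at hsub; exact hsub.1
  have hsC : D.Hbar (Fin.last (q+1)) (Fin.last q) = (hs:ℂ) := by
    rw [hlast] at hsub
    apply Complex.ext
    · simp [hhs]
    · simp [hsub.2]
  -- N = Qbar * Hsq
  set N : Matrix (Fin (q+1)) (Fin (q+1)) ℂ := Qbar * D.Hsq with hNdef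
  -- entries of N in the first q columns
  have hNc : ∀ (a : Fin (q+1)) (c : Fin q),
      N a c.castSucc = if h : (a:ℕ) < q then R ⟨a,h⟩ c else 0 := by
    intro a c
    have h2 : N a c.castSucc = (Qbar * D.Hprev) a c := rfl
    rw [h2, hqr_prev, Matrix.of_apply]
  -- eta is the bottom-right entry of N
  -- eta ≠ 0
  have hQu : IsUnit Qbar := by
    have := mul_eq_one_comm.mp hQbar_unit
    exact IsUnit.of_mul_eq_one _ this
  have hNu : IsUnit N := by rw [hNdef]; exact hQu.mul hHinv
  -- tau = Qbar applied to beta e1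
  set tau : Fin (q+1) → ℂ := fun a => (D.beta : ℂ) * Qbar a 0 with htaudef
  have htau : Qbar *ᵥ (D.beta • e1 q) = tau := by
    funext a
    simp [htaudef, Matrix.mulVec, dotProduct, e1, Complex.real_smul, mul_ite,
      mul_comm, Finset.sum_ite_eq]
  -- the FOM solution z
  set z : Fin (q+1) → ℂ := D.Hsq⁻¹ *ᵥ (D.beta • e1 q) with hzdef
  have hz : D.Hsq *ᵥ z = D.beta • e1 q := by
    rw [hzdef, Matrix.mulVec_mulVec,
      Matrix.mul_nonsing_inv _ ((Matrix.isUnit_iff_isUnit_det _).mp hHinv), Matrix.one_mulVec]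
  have hNz : N *ᵥ z = tau := by
    rw [hNdef, ← Matrix.mulVec_mulVec, hz, htau]
  -- identification of yprev
  have hRyprev : R *ᵥ yprev = fun c : Fin q => tau c.castSucc := by
    have hRu : IsUnit R.det := (Matrix.isUnit_iff_isUnit_det R).mp hR_inv
    set yhat : Fin q → ℂ := R⁻¹ *ᵥ (fun c : Fin q => tau c.castSucc) with hyhatdef
    have hRyhat : R *ᵥ yhat = fun c : Fin q => tau c.castSucc := by
      rw [hyhatdef, Matrix.mulVec_mulVec, Matrix.mul_nonsing_inv _ hRu, Matrix.one_mulVec]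
    have hres : Qbar *ᵥ ((D.beta • e1 q) - D.Hprev *ᵥ yhat) =
        fun a : Fin (q+1) => if (a:ℕ) < q then 0 else tau a := by
      rw [Matrix.mulVec_sub, htau, Matrix.mulVec_mulVec, hqr_prev]
      funext a
      simp only [Pi.sub_apply]
      have hPa : ((Matrix.of fun (r : Fin (q+1)) (c : Fin q) =>
          if h : (r : ℕ) < q then R ⟨r, h⟩ c else 0) *ᵥ yhat) a
          = if h : (a:ℕ) < q then (R *ᵥ yhat) ⟨a, h⟩ else 0 := by
        rw [Matrix.mulVec, dotProduct]
        by_cases h : (a:ℕ) < q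
        · rw [dif_pos h, Matrix.mulVec, dotProduct]
          refine Finset.sum_congr rfl fun c _ => ?_
          rw [Matrix.of_apply, dif_pos h]
        · rw [dif_neg h]
          refine Finset.sum_eq_zero fun c _ => ?_
          rw [Matrix.of_apply, dif_neg h, zero_mul]
      rw [hPa]
      by_cases h : (a:ℕ) < q
      · rw [dif_pos h, if_pos h, hRyhat]
        have h3 : (fun c : Fin q => tau c.castSucc) ⟨(a:ℕ), h⟩ = tau a := rfl
        rw [h3, sub_self]
      · rw [dif_neg h, if_neg h, sub_zero]
    have hnp : D.Hprevᴴ *ᵥ ((D.beta • e1 q) - D.Hprev *ᵥ yhat) = 0 := by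
      have hH : (Qbar * D.Hprev)ᴴ * Qbar = D.Hprevᴴ := by
        rw [Matrix.conjTranspose_mul, Matrix.mul_assoc, hQbar_unit, Matrix.mul_one]
      rw [← hH, ← Matrix.mulVec_mulVec, hres]
      funext c
      rw [Matrix.mulVec, dotProduct]
      refine Finset.sum_eq_zero fun a _ => ?_
      rw [Matrix.conjTranspose_apply, hqr_prev, Matrix.of_apply]
      by_cases h : (a:ℕ) < q
      · simp [h]
      · simp [h]
      
    have hminp := min_of_normal' D.Hprev (D.beta • e1 q) yhat hnp
    have : yhat = yprev := hyprev.2 yhat hminp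
    rw [← this, hRyhat]
  -- the big unitary Qh
  set Qh : Matrix (Fin (q+2)) (Fin (q+2)) ℂ := Matrix.of fun (r c : Fin (q+2)) =>
      if hr : (r : ℕ) < q + 1 then
        (if hc : (c : ℕ) < q + 1 then Qbar ⟨r, hr⟩ ⟨c, hc⟩ else 0)
      else if (c : ℕ) < q + 1 then 0 else 1 with hQhdef
  have hQh1 : ∀ (r c : Fin (q+1)), Qh r.castSucc c.castSucc = Qbar r c := by
    intro r c
    simp only [hQhdef, Matrix.of_apply, Fin.coe_castSucc]
    rw [dif_pos r.isLt, dif_pos c.isLt]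
  have hQh2 : ∀ r : Fin (q+1), Qh r.castSucc (Fin.last (q+1)) = 0 := by
    intro r
    simp only [hQhdef, Matrix.of_apply, Fin.coe_castSucc, Fin.val_last]
    rw [dif_pos r.isLt, dif_neg (lt_irrefl (q+1))]
  have hQh3 : ∀ c : Fin (q+1), Qh (Fin.last (q+1)) c.castSucc = 0 := by
    intro c
    simp only [hQhdef, Matrix.of_apply, Fin.coe_castSucc, Fin.val_last]
    rw [dif_neg (lt_irrefl (q+1)), if_pos c.isLt]
  have hQh4 : Qh (Fin.last (q+1)) (Fin.last (q+1)) = 1 := by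
    simp only [hQhdef, Matrix.of_apply, Fin.val_last]
    rw [dif_neg (lt_irrefl (q+1)), if_neg (lt_irrefl (q+1))]
  have hQhu : Qhᴴ * Qh = 1 := by
    apply Matrix.ext
    intro a b
    rw [Matrix.mul_apply]
    simp only [Matrix.conjTranspose_apply]
    rcases Fin.eq_castSucc_or_eq_last a with ⟨a', rfl⟩ | rfl <;>
      rcases Fin.eq_castSucc_or_eq_last b with ⟨b', rfl⟩ | rfl
    · rw [Fin.sum_univ_castSucc]
      simp only [hQh1, hQh3, star_zero, zero_mul, add_zero]
      have h1 : ∑ c : Fin (q+1), star (Qbar c a') * Qbar c b'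
          = (1 : Matrix (Fin (q+1)) (Fin (q+1)) ℂ) a' b' := by
        rw [← hQbar_unit, Matrix.mul_apply]
        rfl
      rw [h1]
      by_cases h : a' = b' <;> simp [Matrix.one_apply, h, Fin.castSucc_inj]
    · rw [Fin.sum_univ_castSucc]
      simp only [hQh2, hQh3, hQh4, star_zero, zero_mul, mul_zero, mul_one,
        Finset.sum_const_zero, zero_add]
      rw [Matrix.one_apply_ne (Fin.castSucc_lt_last a').ne]
    · rw [Fin.sum_univ_castSucc]
      simp only [hQh2, hQh3, hQh4, star_zero, star_one, zero_mul, mul_zero, one_mul,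
        Finset.sum_const_zero, zero_add]
      rw [Matrix.one_apply_ne (Fin.castSucc_lt_last b').ne']
    · rw [Fin.sum_univ_castSucc]
      simp only [hQh2, hQh4, star_zero, star_one, zero_mul, one_mul,
        Finset.sum_const_zero, zero_add, Matrix.one_apply_eq]
  -- M = Qh * Hbar and its structure
  set M : Matrix (Fin (q+2)) (Fin (q+1)) ℂ := Qh * D.Hbar with hMdef
  have hMtop : ∀ (a : Fin (q+1)) (c : Fin (q+1)), M a.castSucc c = N a c := by
    intro a c
    rw [hMdef, Matrix.mul_apply, Fin.sum_univ_castSucc]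
    simp only [hQh1, hQh2, zero_mul, add_zero]
    rw [hNdef, Matrix.mul_apply]
    rfl
  have hMbot : ∀ c : Fin (q+1), M (Fin.last (q+1)) c = D.Hbar (Fin.last (q+1)) c := by
    intro c
    rw [hMdef, Matrix.mul_apply, Fin.sum_univ_castSucc]
    simp only [hQh3, hQh4, zero_mul, one_mul, Finset.sum_const_zero, zero_add]
  have hHbarbot : ∀ c : Fin q, D.Hbar (Fin.last (q+1)) c.castSucc = 0 := by
    intro c
    exact D.hess _ _ (by simp only [Fin.coe_castSucc, Fin.val_last]; omega)
  have heta2 : eta = N (Fin.last q) (Fin.last q) := by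
    exact heta.trans (hMtop (Fin.last q) (Fin.last q))
  have heta0 : eta ≠ 0 := by
    have hNN : N * N⁻¹ = 1 := Matrix.mul_nonsing_inv N ((Matrix.isUnit_iff_isUnit_det N).mp hNu)
    have h1 : N *ᵥ (N⁻¹ *ᵥ Pi.single (Fin.last q) 1) = Pi.single (Fin.last q) 1 := by
      rw [Matrix.mulVec_mulVec, hNN, Matrix.one_mulVec]
    have h2 := congrFun h1 (Fin.last q)
    rw [Matrix.mulVec, dotProduct, Fin.sum_univ_castSucc] at h2
    simp only [hNc, Fin.val_last, lt_self_iff_false, dite_false, zero_mul,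
      Finset.sum_const_zero, zero_add, Pi.single_eq_same] at h2
    rw [← heta2] at h2
    exact left_ne_zero_of_mul_eq_one h2
  have hzlast : eta * z (Fin.last q) = tau (Fin.last q) := by
    have h := congrFun hNz (Fin.last q)
    rw [Matrix.mulVec, dotProduct, Fin.sum_univ_castSucc] at h
    simp only [hNc, Fin.val_last, lt_self_iff_false, dite_false, zero_mul,
      Finset.sum_const_zero, zero_add] at h
    rw [heta2]
    exact h
  -- scalar bookkeeping
  set Dn : ℝ := ‖eta‖ ^ 2 + hs ^ 2 with hDndef
  have hDn0 : 0 < Dn := by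
    have h1 : (0:ℝ) ≤ ‖eta‖ ^ 2 := sq_nonneg _
    have h2 : (0:ℝ) < hs ^ 2 := by positivity
    linarith
  have hcj2 : cj ^ 2 = ‖eta‖ ^ 2 / Dn := by
    rw [hcj, div_pow, Real.sq_sqrt hDn0.le]
  have hsj2 : sj ^ 2 = hs ^ 2 / Dn := by
    rw [hsj, div_pow, Real.sq_sqrt hDn0.le]
  have hcs1 : cj ^ 2 + sj ^ 2 = 1 := by
    rw [hcj2, hsj2, ← add_div, hDndef, div_self hDn0.ne']
  set g : ℂ := ((cj ^ 2 : ℝ) : ℂ) with hgdef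
  set sg : ℂ := ((sj ^ 2 : ℝ) : ℂ) with hsgdef
  have hgs1 : g + sg = 1 := by
    rw [hgdef, hsgdef, ← Complex.ofReal_add, hcs1, Complex.ofReal_one]
  have hkey : (starRingEnd ℂ) eta * sg * eta = (hs:ℂ)^2 * g := by
    have hme : (starRingEnd ℂ) eta * eta = (Complex.normSq eta : ℂ) := by
      rw [mul_comm, Complex.mul_conj]
    have habs : ((‖eta‖ : ℝ) : ℂ)^2 = (Complex.normSq eta : ℂ) := by
      norm_cast
      exact Complex.sq_norm eta
    rw [hsgdef, hgdef, hsj2, hcj2, mul_comm ((starRingEnd ℂ) eta) _, mul_assoc, hme]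
    push_cast
    rw [habs]
    ring
  -- the candidate minimizer
  set ystar : Fin (q+1) → ℂ := g • z + sg • (Fin.snoc yprev 0 : Fin (q+1) → ℂ) with hystardef
  have hNsnoc : N *ᵥ (Fin.snoc yprev 0 : Fin (q+1) → ℂ) =
      fun a : Fin (q+1) => if h : (a:ℕ) < q then tau a else 0 := by
    funext a
    rw [Matrix.mulVec, dotProduct, Fin.sum_univ_castSucc]
    simp only [Fin.snoc_castSucc, Fin.snoc_last, mul_zero, add_zero, hNc]
    by_cases h : (a:ℕ) < q
    · simp only [dif_pos h]
      have h2 := congrFun hRyprev ⟨a, h⟩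
      rw [Matrix.mulVec, dotProduct] at h2
      rw [h2]
      congr 1
    · simp only [dif_neg h, zero_mul, Finset.sum_const_zero]
  have hNystar : N *ᵥ ystar =
      fun a : Fin (q+1) => if (a:ℕ) < q then tau a else g * tau a := by
    funext a
    rw [hystardef, Matrix.mulVec_add, Matrix.mulVec_smul, Matrix.mulVec_smul, hNz, hNsnoc]
    simp only [Pi.add_apply, Pi.smul_apply, smul_eq_mul]
    by_cases h : (a:ℕ) < q
    · simp only [h, if_true, dite_true]
      rw [← add_mul, hgs1, one_mul]
    · simp only [h, if_false, dite_false, mul_zero, add_zero]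
  have hystarlast : ystar (Fin.last q) = g * z (Fin.last q) := by
    rw [hystardef]
    simp [Fin.snoc_last]
  -- normal equations for ystar
  have hnormal : D.Hbarᴴ *ᵥ ((D.beta • e1 (q+1)) - D.Hbar *ᵥ ystar) = 0 := by
    have hHb : Qhᴴ * M = D.Hbar := by
      rw [hMdef, ← Matrix.mul_assoc, hQhu, Matrix.one_mul]
    have hHT : Mᴴ * Qh = D.Hbarᴴ := by
      rw [hMdef, Matrix.conjTranspose_mul, Matrix.mul_assoc, hQhu, Matrix.mul_one]
    rw [← hHT, ← Matrix.mulVec_mulVec]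
    have hQres : Qh *ᵥ ((D.beta • e1 (q+1)) - D.Hbar *ᵥ ystar) =
        fun a : Fin (q+2) => if (a:ℕ) < q + 1 then
          (if (a:ℕ) < q then 0 else sg * tau (Fin.last q))
        else -((hs:ℂ) * (g * z (Fin.last q))) := by
      have hQe1 : Qh *ᵥ (D.beta • e1 (q+1)) = fun a => (D.beta : ℂ) * Qh a 0 := by
        funext a
        simp [Matrix.mulVec, dotProduct, e1, Complex.real_smul, mul_ite, mul_comm,
          Finset.sum_ite_eq]
      rw [Matrix.mulVec_sub, Matrix.mulVec_mulVec, ← hMdef, hQe1]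
      funext a
      simp only [Pi.sub_apply]
      rcases Fin.eq_castSucc_or_eq_last a with ⟨a', rfl⟩ | rfl
      · have hq0 : Qh a'.castSucc 0 = Qbar a' 0 := hQh1 a' 0
        have hM2 : (M *ᵥ ystar) a'.castSucc = (N *ᵥ ystar) a' := by
          rw [Matrix.mulVec, Matrix.mulVec, dotProduct, dotProduct]
          exact Finset.sum_congr rfl fun k _ => by rw [hMtop]
        rw [hq0, hM2, hNystar]
        dsimp only [Fin.coe_castSucc]
        rw [if_pos a'.isLt]
        by_cases h : (a':ℕ) < q
        · rw [if_pos h, if_pos h]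
          exact sub_self (tau a')
        · rw [if_neg h, if_neg h]
          have ha : a' = Fin.last q := Fin.ext (by simp only [Fin.val_last]; omega)
          subst ha
          have hsg : sg = 1 - g := by rw [← hgs1]; ring
          show tau (Fin.last q) - g * tau (Fin.last q) = sg * tau (Fin.last q)
          rw [hsg]; ring
      · have hq0 : Qh (Fin.last (q+1)) 0 = 0 := by
          have h0 : ((0 : Fin (q+2))) = (0 : Fin (q+1)).castSucc := rfl
          rw [h0, hQh3]
        have hM2 : (M *ᵥ ystar) (Fin.last (q+1)) = (hs:ℂ) * (g * z (Fin.last q)) := by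
          rw [Matrix.mulVec, dotProduct, Fin.sum_univ_castSucc]
          simp only [hMbot, hHbarbot, zero_mul, Finset.sum_const_zero, zero_add, hsC]
          rw [hystarlast]
        rw [hq0, hM2, mul_zero, zero_sub]
        dsimp only [Fin.val_last]
        rw [if_neg (lt_irrefl (q+1))]
    rw [hQres]
    funext c
    rw [Matrix.mulVec, dotProduct, Fin.sum_univ_castSucc]
    simp only [Matrix.conjTranspose_apply, Fin.coe_castSucc, Fin.val_last, Fin.is_lt,
      if_true, lt_self_iff_false, if_false, hMbot, hMtop, Pi.zero_apply]
    rcases Fin.eq_castSucc_or_eq_last c with ⟨c', rfl⟩ | rfl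
    · rw [hHbarbot, star_zero, zero_mul, add_zero]
      refine Finset.sum_eq_zero fun a _ => ?_
      by_cases h : (a:ℕ) < q
      · rw [if_pos h, mul_zero]
      · have ha : a = Fin.last q := Fin.ext (by simp only [Fin.val_last]; omega)
        subst ha
        rw [hNc, dif_neg (by simp), star_zero, zero_mul]
    · have hsum : (∑ a : Fin (q+1), star (N a (Fin.last q)) *
          (if (a:ℕ) < q then 0 else sg * tau (Fin.last q)))
          = star (N (Fin.last q) (Fin.last q)) * (sg * tau (Fin.last q)) := by
        rw [Finset.sum_eq_single_of_mem (Fin.last q) (Finset.mem_univ _)]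
        · rw [if_neg (by simp)]
        · intro b _ hb
          rw [if_pos (Fin.val_lt_last hb), mul_zero]
      rw [hsum, hsC, ← heta2]
      simp only [Complex.star_def, Complex.conj_ofReal]
      rw [← hzlast]
      linear_combination z (Fin.last q) * hkey
  -- ystar is the unique minimizer, hence equals yj
  have hmin := min_of_normal' D.Hbar (D.beta • e1 (q+1)) ystar hnormal
  have hyeq : ystar = yj := hyj.2 ystar hmin
  -- final assembly
  rw [← hyeq]
  have hVsnoc : D.Vprev *ᵥ yprev = D.Vfull *ᵥ (Fin.snoc yprev 0 : Fin (q+1) → ℂ) := by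
    funext r
    rw [Matrix.mulVec, Matrix.mulVec, dotProduct, dotProduct, Fin.sum_univ_castSucc]
    simp only [Fin.snoc_castSucc, Fin.snoc_last, mul_zero, add_zero]
    exact Finset.sum_congr rfl fun c _ => rfl
  have hsmul : ∀ (rr : ℝ) (v : Fin n → ℂ), rr • v = ((rr:ℝ):ℂ) • v := by
    intro rr v
    funext i
    simp [Complex.real_smul]
  rw [hsmul (cj^2), hsmul (sj^2), hVsnoc, ← hgdef, ← hsgdef]
  rw [hystardef, Matrix.mulVec_add, Matrix.mulVec_smul, Matrix.mulVec_smul]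
  have hx : g • D.x0 + sg • D.x0 = D.x0 := by rw [← add_smul, hgs1, one_smul]
  rw [smul_add, smul_add, add_add_add_comm, hx]


end
end

section
/- Assume a breakdown-free block Arnoldi decomposition of length j (j ≥ 1), and let Q̄_{j−1} ∈ ℂ^{jL×jL} be unitary with Q̄_{j−1} H̄_{j−1} = [R_{j−1}; 0_{L×(j−1)L}], where R_{j−1} ∈ ℂ^{(j−1)L×(j−1)L} is upper triangular and invertible (for j = 1 take Q̄₀ = I_L). Then there exist a unitary matrix Q_j ∈ ℂ^{(j+1)L×(j+1)L}, equal to the identity outside its trailing principal 2L×2L block, and a unitary matrix Q̂_j^{(b)} ∈ ℂ^{L×L}, such that Q_j·diag(Q̄_{j−1}, I_L)·H̄_j = [R̄_j; 0_{L×jL}] and diag(I_{(j−1)L}, Q̂_j^{(b)})·Q̄_{j−1}·H_j = R̂_j, where R̄_j = [[R_{j−1}, Z_j],[0, N_j]] and R̂_j = [[R_{j−1}, Z_j],[0, N̂_j]] are upper triangular, share the same block Z_j ∈ ℂ^{(j−1)L×L}, and have N_j, N̂_j ∈ ℂ^{L×L} upper triangular; in particular both R-factors have R_{j−1}, the R-factor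 of H̄_{j−1}, as their upper-left (j−1)L×(j−1)L block. -/
open Matrix

noncomputable section

set_option maxHeartbeats 1000000

/-- Squared Frobenius norm of a complex matrix. -/
def frobSq {a b : Type*} [Fintype a] [Fintype b] (M : Matrix a b ℂ) : ℝ :=
  ∑ r, ∑ c, Complex.normSq (M r c)

/-- The block Krylov subspace `𝕂_i(A, F)`: the span of all columns of
`F, A F, …, A^(i-1) F`. -/
def blockKrylov {n L : ℕ} (A : Matrix (Fin n) (Fin n) ℂ)
    (F : Matrix (Fin n) (Fin L) ℂ) (i : ℕ) : Submodule ℂ (Fin n → ℂ) :=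
  Submodule.span ℂ { v | ∃ k < i, ∃ c : Fin L, v = fun r => (A ^ k * F) r c }

/-- `E_L^{[mL]}` : the first `L` columns of the `mL × mL` identity matrix
(block row indexing). -/
def EL (m L : ℕ) : Matrix (Fin m × Fin L) (Fin L) ℂ :=
  Matrix.of fun r c => if (r.1 : ℕ) = 0 ∧ r.2 = c then 1 else 0

/-- An `L × L` matrix is upper triangular. -/
def utL {L : ℕ} (M : Matrix (Fin L) (Fin L) ℂ) : Prop :=
  ∀ a b : Fin L, (b : ℕ) < (a : ℕ) → M a b = 0

/-- A block-indexed `mL × mL` matrix is upper triangular. -/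
def utBig {m L : ℕ} (M : Matrix (Fin m × Fin L) (Fin m × Fin L) ℂ) : Prop :=
  ∀ r c : Fin m × Fin L, (c.1 : ℕ) * L + (c.2 : ℕ) < (r.1 : ℕ) * L + (r.2 : ℕ) → M r c = 0

/-- Stack a block-tall matrix on top of an extra block row. -/
def vcat {m L : ℕ} {col : Type*} (T : Matrix (Fin m × Fin L) col ℂ)
    (Bo : Matrix (Fin L) col ℂ) : Matrix (Fin (m+1) × Fin L) col ℂ :=
  Matrix.of fun r cc => if h : (r.1 : ℕ) < m then T (⟨r.1, h⟩, r.2) cc else Bo r.2 cc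

/-- The block matrix `[[R, Z], [0, N]]`. -/
def twoBlock {m L : ℕ} (R : Matrix (Fin m × Fin L) (Fin m × Fin L) ℂ)
    (Z : Matrix (Fin m × Fin L) (Fin L) ℂ) (N : Matrix (Fin L) (Fin L) ℂ) :
    Matrix (Fin (m+1) × Fin L) (Fin (m+1) × Fin L) ℂ :=
  Matrix.of fun r c =>
    if hr : (r.1 : ℕ) < m then
      if hc : (c.1 : ℕ) < m then R (⟨r.1, hr⟩, r.2) (⟨c.1, hc⟩, c.2)
      else Z (⟨r.1, hr⟩, r.2) c.2
    else
      if (c.1 : ℕ) < m then 0 else N r.2 c.2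

/-- The block matrix `[[R, Z], [0, Hmid], [0, Hbot]]`. -/
def threeBlock {m L : ℕ} (R : Matrix (Fin m × Fin L) (Fin m × Fin L) ℂ)
    (Z : Matrix (Fin m × Fin L) (Fin L) ℂ) (Hmid Hbot : Matrix (Fin L) (Fin L) ℂ) :
    Matrix (Fin (m+2) × Fin L) (Fin (m+1) × Fin L) ℂ :=
  Matrix.of fun r c =>
    if hr : (r.1 : ℕ) < m then
      if hc : (c.1 : ℕ) < m then R (⟨r.1, hr⟩, r.2) (⟨c.1, hc⟩, c.2)
      else Z (⟨r.1, hr⟩, r.2) c.2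
    else
      if (c.1 : ℕ) < m then 0
      else if (r.1 : ℕ) = m then Hmid r.2 c.2 else Hbot r.2 c.2

/-- `diag(Q, I_L)` : extend a block-indexed square matrix by an identity block. -/
def extendOne {m L : ℕ} (Q : Matrix (Fin m × Fin L) (Fin m × Fin L) ℂ) :
    Matrix (Fin (m+1) × Fin L) (Fin (m+1) × Fin L) ℂ :=
  Matrix.of fun r c =>
    if hr : (r.1 : ℕ) < m then
      if hc : (c.1 : ℕ) < m then Q (⟨r.1, hr⟩, r.2) (⟨c.1, hc⟩, c.2) else 0
    else
      if (c.1 : ℕ) < m then 0 else if r.2 = c.2 then 1 else 0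

/-- `diag(I_{mL}, Q)` : an identity block, then `Q` in the bottom right corner. -/
def extendBot {m L : ℕ} (Q : Matrix (Fin L) (Fin L) ℂ) :
    Matrix (Fin (m+1) × Fin L) (Fin (m+1) × Fin L) ℂ :=
  Matrix.of fun r c =>
    if (r.1 : ℕ) < m ∨ (c.1 : ℕ) < m then (if r = c then 1 else 0)
    else Q r.2 c.2

/-- The `(m+2)L × (m+2)L` matrix which is the identity outside of its trailing
principal `2L × 2L` block, which is `[[Q11, Q12], [Q21, Q22]]`. -/
def trailingTwo {m L : ℕ} (Q11 Q12 Q21 Q22 : Matrix (Fin L) (Fin L) ℂ) :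
    Matrix (Fin (m+2) × Fin L) (Fin (m+2) × Fin L) ℂ :=
  Matrix.of fun r c =>
    if (r.1 : ℕ) < m ∨ (c.1 : ℕ) < m then (if r = c then 1 else 0)
    else if (r.1 : ℕ) = m then
      (if (c.1 : ℕ) = m then Q11 r.2 c.2 else Q12 r.2 c.2)
    else
      (if (c.1 : ℕ) = m then Q21 r.2 c.2 else Q22 r.2 c.2)

/-- The block matrix `[R ; 0]` (one extra zero block row below `R`). -/
def stackZero {m L : ℕ} (R : Matrix (Fin m × Fin L) (Fin m × Fin L) ℂ) :
    Matrix (Fin (m+1) × Fin L) (Fin m × Fin L) ℂ :=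
  Matrix.of fun r c => if h : (r.1 : ℕ) < m then R (⟨r.1, h⟩, r.2) c else 0

/-- A breakdown-free block Arnoldi decomposition of length `j = p + 1` for the block
linear system `A X = B` with initial guess `X₀` (block size `L`). -/
structure BlockArnoldi (n L p : ℕ) : Type where
  A : Matrix (Fin n) (Fin n) ℂ
  B : Matrix (Fin n) (Fin L) ℂ
  X0 : Matrix (Fin n) (Fin L) ℂ
  W : Matrix (Fin n) (Fin (p+2) × Fin L) ℂ
  S0 : Matrix (Fin L) (Fin L) ℂ
  Hbar : Matrix (Fin (p+2) × Fin L) (Fin (p+1) × Fin L) ℂ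
  hL : 1 ≤ L
  hn : (p+2) * L ≤ n
  F0_rank : (B - A * X0).rank = L
  orth : Wᴴ * W = 1
  S0_ut : utL S0
  S0_inv : IsUnit S0
  F0_eq : B - A * X0 = (W.submatrix id fun c : Fin L => ((0 : Fin (p+2)), c)) * S0
  span : ∀ i : ℕ, i ≤ p + 2 →
    blockKrylov A (B - A * X0) i =
      Submodule.span ℂ { v | ∃ c : Fin (p+2) × Fin L, (c.1 : ℕ) < i ∧ v = fun r => W r c }
  arnoldi : A * W.submatrix id (Prod.map Fin.castSucc id) = W * Hbar
  hess : ∀ r c, (c.1 : ℕ) + 1 < (r.1 : ℕ) → Hbar r c = 0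
  sub_ut : ∀ (k : Fin (p+1)) (a b : Fin L), (b : ℕ) < (a : ℕ) → Hbar (k.succ, a) (k, b) = 0
  sub_inv : ∀ k : Fin (p+1), IsUnit (Matrix.of fun a b : Fin L => Hbar (k.succ, a) (k, b))

namespace BlockArnoldi

variable {n L p : ℕ}

/-- `H̄_{j-1}`, the leading `jL × (j-1)L` submatrix of `H̄_j`. -/
def Hprev (D : BlockArnoldi n L p) : Matrix (Fin (p+1) × Fin L) (Fin p × Fin L) ℂ :=
  D.Hbar.submatrix (Prod.map Fin.castSucc id) (Prod.map Fin.castSucc id)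

/-- `H_j`, the leading `jL × jL` submatrix of `H̄_j`. -/
def Hsq (D : BlockArnoldi n L p) : Matrix (Fin (p+1) × Fin L) (Fin (p+1) × Fin L) ℂ :=
  D.Hbar.submatrix (Prod.map Fin.castSucc id) id

/-- `W_j = [V₁ … V_j]`. -/
def Wfull (D : BlockArnoldi n L p) : Matrix (Fin n) (Fin (p+1) × Fin L) ℂ :=
  D.W.submatrix id (Prod.map Fin.castSucc id)

/-- `W_{j-1} = [V₁ … V_{j-1}]`. -/
def Wprev (D : BlockArnoldi n L p) : Matrix (Fin n) (Fin p × Fin L) ℂ :=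
  D.W.submatrix id (Prod.map (fun i : Fin p => (i.castSucc.castSucc : Fin (p+2))) id)

/-- `V_j`, the `j`-th block Arnoldi vector. -/
def Vj (D : BlockArnoldi n L p) : Matrix (Fin n) (Fin L) ℂ :=
  D.W.submatrix id fun c : Fin L => (((Fin.last p).castSucc : Fin (p+2)), c)

end BlockArnoldi

/-- `Y` is the unique minimizer of `‖Hb • Y' - T‖_F` over all `Y'`. -/
def IsUniqueFrobMin {a b c : Type*} [Fintype a] [Fintype b] [Fintype c]
    (Hb : Matrix a b ℂ) (T : Matrix a c ℂ) (Y : Matrix b c ℂ) : Prop :=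
  (∀ Y', frobSq (Hb * Y - T) ≤ frobSq (Hb * Y' - T)) ∧
  ∀ Y', (∀ Y'', frobSq (Hb * Y' - T) ≤ frobSq (Hb * Y'' - T)) → Y' = Y

/-- `Y_j^{(G)}` is the solution of the `j`-th block GMRES least-squares subproblem. -/
def IsBlockGMRESj {n L p : ℕ} (D : BlockArnoldi n L p)
    (Y : Matrix (Fin (p+1) × Fin L) (Fin L) ℂ) : Prop :=
  IsUniqueFrobMin D.Hbar (EL (p+2) L * D.S0) Y

/-- `Y_{j-1}^{(G)}` is the solution of the `(j-1)`-st block GMRES least-squares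
subproblem. -/
def IsBlockGMRESprev {n L p : ℕ} (D : BlockArnoldi n L p)
    (Y : Matrix (Fin p × Fin L) (Fin L) ℂ) : Prop :=
  IsUniqueFrobMin D.Hprev (EL (p+1) L * D.S0) Y

/-- The QR setup at step `j = p+1` : a QR factorization `Q̄_{j-1} H̄_{j-1} = [R_{j-1}; 0]`
from the previous step, the induced splitting
`diag(Q̄_{j-1}, I_L)·H̄_j = [[R,Z],[0,Ĥ_{jj}],[0,H_{j+1,j}]]`, the unitary `Q_j`
(identity outside its trailing principal `2L×2L` block) completing the
QR factorization of `H̄_j`, and the unitary `Q̂_j^{(b)}` triangularizing `Ĥ_{jj}`. -/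
structure QRSetup (L p : ℕ) (Hbar : Matrix (Fin (p+2) × Fin L) (Fin (p+1) × Fin L) ℂ)
    (S0 : Matrix (Fin L) (Fin L) ℂ) : Type where
  Qbar : Matrix (Fin (p+1) × Fin L) (Fin (p+1) × Fin L) ℂ
  R : Matrix (Fin p × Fin L) (Fin p × Fin L) ℂ
  Z : Matrix (Fin p × Fin L) (Fin L) ℂ
  Hhat : Matrix (Fin L) (Fin L) ℂ
  Hsub : Matrix (Fin L) (Fin L) ℂ
  Q11 : Matrix (Fin L) (Fin L) ℂ
  Q12 : Matrix (Fin L) (Fin L) ℂ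
  Q21 : Matrix (Fin L) (Fin L) ℂ
  Q22 : Matrix (Fin L) (Fin L) ℂ
  N : Matrix (Fin L) (Fin L) ℂ
  Qhatb : Matrix (Fin L) (Fin L) ℂ
  Nhat : Matrix (Fin L) (Fin L) ℂ
  Qbar_unit : Qbarᴴ * Qbar = 1
  Qbar_base : p = 0 → Qbar = 1
  R_ut : utBig R
  R_inv : IsUnit R
  qr_prev : Qbar * Hbar.submatrix (Prod.map Fin.castSucc id) (Prod.map Fin.castSucc id)
      = stackZero R
  qr_split : extendOne Qbar * Hbar = threeBlock R Z Hhat Hsub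
  Qj_unit : (trailingTwo (m := p) Q11 Q12 Q21 Q22)ᴴ * trailingTwo (m := p) Q11 Q12 Q21 Q22 = 1
  qr_full : trailingTwo (m := p) Q11 Q12 Q21 Q22 * (extendOne Qbar * Hbar)
      = threeBlock R Z N 0
  N_ut : utL N
  N_inv : IsUnit N
  Qhatb_unit : Qhatbᴴ * Qhatb = 1
  Nhat_def : Nhat = Qhatb * Hhat
  Nhat_ut : utL Nhat

namespace QRSetup

variable {L p : ℕ} {Hbar : Matrix (Fin (p+2) × Fin L) (Fin (p+1) × Fin L) ℂ}
  {S0 : Matrix (Fin L) (Fin L) ℂ}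

/-- `C̃_j` : the last `L` rows of `Q̄_{j-1} E_L^{[jL]} S₀`. -/
def Ct (S : QRSetup L p Hbar S0) : Matrix (Fin L) (Fin L) ℂ :=
  Matrix.of fun a b => (S.Qbar * (EL (p+1) L * S0)) ((Fin.last p), a) b

/-- `C_j := Q_j^{(11)} C̃_j`. -/
def C (S : QRSetup L p Hbar S0) : Matrix (Fin L) (Fin L) ℂ := S.Q11 * S.Ct

/-- `Ĉ_j := Q̂_j^{(b)} C̃_j`. -/
def Chat (S : QRSetup L p Hbar S0) : Matrix (Fin L) (Fin L) ℂ := S.Qhatb * S.Ct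

end QRSetup


section Stmt3Aux

open Matrix

lemma stmt3aux_qr_square (m : ℕ) (M : Matrix (Fin m) (Fin m) ℂ) :
    ∃ Q : Matrix (Fin m) (Fin m) ℂ, Qᴴ * Q = 1 ∧
      ∀ i j : Fin m, (j : ℕ) < (i : ℕ) → (Q * M) i j = 0 := by
  have h : Module.finrank ℂ (EuclideanSpace ℂ (Fin m)) = Fintype.card (Fin m) := by simp
  have wf : WellFoundedLT (Fin m) := inferInstanceAs (WellFoundedLT (Fin m))
  set f : Fin m → EuclideanSpace ℂ (Fin m) := fun j => WithLp.toLp 2 (fun k => M k j) with hf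
  set b : OrthonormalBasis (Fin m) ℂ (EuclideanSpace ℂ (Fin m)) :=
    @InnerProductSpace.gramSchmidtOrthonormalBasis ℂ (EuclideanSpace ℂ (Fin m)) _ _ _ (Fin m) _ _ wf _ _ h f
    with hb
  refine ⟨Matrix.of fun i k => star (b i k), ?_, ?_⟩
  · rw [← mul_eq_one_comm]
    ext i i'
    simp only [Matrix.mul_apply, Matrix.conjTranspose_apply, Matrix.of_apply, star_star]
    have h2 := orthonormal_iff_ite.mp b.orthonormal i i'
    rw [PiLp.inner_apply] at h2
    simpa [Matrix.one_apply, RCLike.inner_apply, mul_comm] using h2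
  · intro i j hij
    have h2 := @InnerProductSpace.gramSchmidtOrthonormalBasis_inv_triangular ℂ (EuclideanSpace ℂ (Fin m))
      _ _ _ (Fin m) _ _ wf _ _ h f j i (by exact hij)
    rw [PiLp.inner_apply] at h2
    simp only [Matrix.mul_apply, Matrix.of_apply]
    rw [← hb] at h2
    simpa [hf, RCLike.inner_apply, mul_comm] using h2

lemma stmt3aux_qr_rect (m l : ℕ) (hl : l ≤ m) (M : Matrix (Fin m) (Fin l) ℂ) :
    ∃ Q : Matrix (Fin m) (Fin m) ℂ, Qᴴ * Q = 1 ∧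
      ∀ i : Fin m, ∀ j : Fin l, (j : ℕ) < (i : ℕ) → (Q * M) i j = 0 := by
  obtain ⟨Q, hQ, htri⟩ := stmt3aux_qr_square m
    (Matrix.of fun k c => if h : (c : ℕ) < l then M k ⟨c, h⟩ else 0)
  refine ⟨Q, hQ, fun i j hij => ?_⟩
  have := htri i (Fin.castLE hl j) (by simpa using hij)
  simp only [Matrix.mul_apply, Matrix.of_apply] at this ⊢
  simpa [Fin.castLE, j.isLt] using this

lemma stmt3aux_qr_trailing (L : ℕ) (V : Matrix (Fin 2 × Fin L) (Fin L) ℂ) :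
    ∃ Qf : Matrix (Fin 2 × Fin L) (Fin 2 × Fin L) ℂ, Qfᴴ * Qf = 1 ∧
      (∀ a b : Fin L, (b : ℕ) < (a : ℕ) → (Qf * V) (0, a) b = 0) ∧
      (∀ a b : Fin L, (Qf * V) (1, a) b = 0) := by
  have hl : L ≤ 2 * L := by omega
  set e : Fin 2 × Fin L ≃ Fin (2 * L) := finProdFinEquiv with he
  obtain ⟨Q', hQ', htri⟩ := stmt3aux_qr_rect (2 * L) L hl
    (Matrix.of fun k c => V (e.symm k) c)
  refine ⟨Matrix.of fun r c => Q' (e r) (e c), ?_, ?_, ?_⟩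
  · ext r c
    have : ∑ k : Fin 2 × Fin L, (starRingEnd ℂ) (Q' (e k) (e r)) * Q' (e k) (e c)
        = ∑ k' : Fin (2 * L), (starRingEnd ℂ) (Q' k' (e r)) * Q' k' (e c) :=
      Equiv.sum_comp e (fun k' => (starRingEnd ℂ) (Q' k' (e r)) * Q' k' (e c))
    have h1 : (Q'ᴴ * Q') (e r) (e c) = (1 : Matrix (Fin (2*L)) (Fin (2*L)) ℂ) (e r) (e c) := by
      rw [hQ']
    simp only [Matrix.mul_apply, Matrix.conjTranspose_apply, RCLike.star_def] at h1 ⊢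
    simp only [Matrix.of_apply, RCLike.star_def]
    rw [this, h1]
    simp [Matrix.one_apply, e.apply_eq_iff_eq]
  · intro a b hab
    have key : ∀ r : Fin 2 × Fin L, (Matrix.of (fun r c => Q' (e r) (e c)) * V) r b
        = (Q' * Matrix.of fun k c => V (e.symm k) c) (e r) b := by
      intro r
      simp only [Matrix.mul_apply, Matrix.of_apply]
      rw [← Equiv.sum_comp e (fun k' => Q' (e r) k' * V (e.symm k') b)]
      simp
    rw [key]
    apply htri
    have : ((e (0, a) : Fin (2*L)) : ℕ) = (a : ℕ) := by simp [he, finProdFinEquiv]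
    omega
  · intro a b
    have key : (Matrix.of (fun r c => Q' (e r) (e c)) * V) (1, a) b
        = (Q' * Matrix.of fun k c => V (e.symm k) c) (e (1, a)) b := by
      simp only [Matrix.mul_apply, Matrix.of_apply]
      rw [← Equiv.sum_comp e (fun k' => Q' (e (1,a)) k' * V (e.symm k') b)]
      simp
    rw [key]
    apply htri
    have : ((e (1, a) : Fin (2*L)) : ℕ) = L + (a : ℕ) := by
      simp [he, finProdFinEquiv]; ring
    omega

lemma stmt3aux_sum_split (m L : ℕ) {β : Type*} [AddCommMonoid β] (g : Fin (m+1) × Fin L → β) :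
    ∑ k, g k = (∑ k : Fin m × Fin L, g (k.1.castSucc, k.2)) + ∑ x : Fin L, g (Fin.last m, x) := by
  rw [Fintype.sum_prod_type, Fin.sum_univ_castSucc, Fintype.sum_prod_type]

lemma stmt3aux_sum_split2 (m L : ℕ) {β : Type*} [AddCommMonoid β] (g : Fin (m+2) × Fin L → β) :
    ∑ k, g k = (∑ k : Fin m × Fin L, g (k.1.castSucc.castSucc, k.2))
      + ((∑ x : Fin L, g ((Fin.last m).castSucc, x)) + ∑ x : Fin L, g (Fin.last (m+1), x)) := by
  rw [stmt3aux_sum_split (m+1) L g,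
    stmt3aux_sum_split m L (fun k => g (k.1.castSucc, k.2)), add_assoc]

lemma stmt3aux_extendOne_cc {m L : ℕ} (Q : Matrix (Fin m × Fin L) (Fin m × Fin L) ℂ)
    (i k : Fin m) (a b : Fin L) :
    extendOne Q (i.castSucc, a) (k.castSucc, b) = Q (i, a) (k, b) := by
  simp [extendOne, i.isLt, k.isLt]

lemma stmt3aux_extendOne_cl {m L : ℕ} (Q : Matrix (Fin m × Fin L) (Fin m × Fin L) ℂ)
    (i : Fin m) (a b : Fin L) :
    extendOne Q (i.castSucc, a) (Fin.last m, b) = 0 := by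
  simp [extendOne, i.isLt]

lemma stmt3aux_extendOne_lc {m L : ℕ} (Q : Matrix (Fin m × Fin L) (Fin m × Fin L) ℂ)
    (k : Fin m) (a b : Fin L) :
    extendOne Q (Fin.last m, a) (k.castSucc, b) = 0 := by
  simp [extendOne, k.isLt]

lemma stmt3aux_extendOne_ll {m L : ℕ} (Q : Matrix (Fin m × Fin L) (Fin m × Fin L) ℂ)
    (a b : Fin L) :
    extendOne Q (Fin.last m, a) (Fin.last m, b) = if a = b then 1 else 0 := by
  simp [extendOne]

lemma stmt3aux_utBig_twoBlock {m L : ℕ} {R : Matrix (Fin m × Fin L) (Fin m × Fin L) ℂ}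
    (Z : Matrix (Fin m × Fin L) (Fin L) ℂ) {N : Matrix (Fin L) (Fin L) ℂ}
    (hR : utBig R) (hN : utL N) : utBig (twoBlock R Z N) := by
  rintro ⟨ri, a⟩ ⟨ci, b⟩ h
  simp only at h
  simp only [twoBlock, Matrix.of_apply]
  by_cases hri : (ri : ℕ) < m
  · rw [dif_pos hri]
    by_cases hci : (ci : ℕ) < m
    · rw [dif_pos hci]
      exact hR _ _ h
    · exfalso
      have h1 : (ri : ℕ) * L + (a : ℕ) < ((ri : ℕ) + 1) * L := by
        rw [add_mul, one_mul]
        exact Nat.add_lt_add_left a.isLt _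
      have h2 : ((ri : ℕ) + 1) * L ≤ (ci : ℕ) * L := Nat.mul_le_mul_right _ (by omega)
      exact lt_irrefl _ (h.trans (h1.trans_le (h2.trans (Nat.le_add_right _ _))))
  · rw [dif_neg hri]
    by_cases hci : (ci : ℕ) < m
    · rw [if_pos hci]
    · rw [if_neg hci]
      apply hN
      have hr : (ri : ℕ) = m := by omega
      have hc : (ci : ℕ) = m := by omega
      rw [hr, hc] at h
      exact Nat.lt_of_add_lt_add_left h

end Stmt3Aux


section Stmt3Aux2

open Matrix

lemma stmt3aux_tt_delta {m L : ℕ} (Q11 Q12 Q21 Q22 : Matrix (Fin L) (Fin L) ℂ)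
    (r c : Fin (m+2) × Fin L) (h : (r.1 : ℕ) < m ∨ (c.1 : ℕ) < m) :
    trailingTwo (m := m) Q11 Q12 Q21 Q22 r c = if r = c then 1 else 0 := by
  simp only [trailingTwo, Matrix.of_apply, if_pos h]

lemma stmt3aux_tt_Q {m L : ℕ} (Qf : Matrix (Fin 2 × Fin L) (Fin 2 × Fin L) ℂ)
    (r c : Fin (m+2) × Fin L) (hr : ¬ (r.1 : ℕ) < m) (hc : ¬ (c.1 : ℕ) < m) :
    trailingTwo (m := m) (Matrix.of fun x y => Qf (0,x) (0,y)) (Matrix.of fun x y => Qf (0,x) (1,y))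
      (Matrix.of fun x y => Qf (1,x) (0,y)) (Matrix.of fun x y => Qf (1,x) (1,y)) r c
    = Qf ((if (r.1 : ℕ) = m then 0 else 1), r.2) ((if (c.1 : ℕ) = m then 0 else 1), c.2) := by
  simp only [trailingTwo, Matrix.of_apply,
    if_neg (by tauto : ¬((r.1:ℕ) < m ∨ (c.1:ℕ) < m))]
  by_cases h1 : (r.1:ℕ) = m <;> by_cases h2 : (c.1:ℕ) = m <;> simp [h1, h2]

lemma stmt3aux_tt_unit {m L : ℕ} (Qf : Matrix (Fin 2 × Fin L) (Fin 2 × Fin L) ℂ)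
    (hQf : Qfᴴ * Qf = 1) :
    (trailingTwo (m := m) (Matrix.of fun x y => Qf (0,x) (0,y))
        (Matrix.of fun x y => Qf (0,x) (1,y)) (Matrix.of fun x y => Qf (1,x) (0,y))
        (Matrix.of fun x y => Qf (1,x) (1,y)))ᴴ *
    trailingTwo (m := m) (Matrix.of fun x y => Qf (0,x) (0,y))
        (Matrix.of fun x y => Qf (0,x) (1,y)) (Matrix.of fun x y => Qf (1,x) (0,y))
        (Matrix.of fun x y => Qf (1,x) (1,y)) = 1 := by
  set T := trailingTwo (m := m) (Matrix.of fun x y => Qf (0,x) (0,y))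
    (Matrix.of fun x y => Qf (0,x) (1,y)) (Matrix.of fun x y => Qf (1,x) (0,y))
    (Matrix.of fun x y => Qf (1,x) (1,y)) with hT
  ext r c
  rw [Matrix.mul_apply]
  simp only [Matrix.conjTranspose_apply]
  by_cases hr : (r.1:ℕ) < m
  · have hk : ∀ k, T k r = if k = r then 1 else 0 :=
      fun k => stmt3aux_tt_delta _ _ _ _ k r (Or.inr hr)
    have : ∑ k, star (T k r) * T k c = ∑ k, (if k = r then T k c else 0) := by
      apply Finset.sum_congr rfl
      intro k _
      rw [hk k]
      split <;> simp
    rw [this, Finset.sum_ite_eq' Finset.univ r (fun k => T k c)]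
    simp only [Finset.mem_univ, if_true]
    rw [hT, stmt3aux_tt_delta _ _ _ _ r c (Or.inl hr), Matrix.one_apply]
  · by_cases hc : (c.1:ℕ) < m
    · have hk : ∀ k, T k c = if k = c then 1 else 0 :=
        fun k => stmt3aux_tt_delta _ _ _ _ k c (Or.inr hc)
      have : ∑ k, star (T k r) * T k c = ∑ k, (if k = c then star (T k r) else 0) := by
        apply Finset.sum_congr rfl
        intro k _
        rw [hk k]
        split <;> simp
      rw [this, Finset.sum_ite_eq' Finset.univ c (fun k => star (T k r))]
      simp only [Finset.mem_univ, if_true]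
      rw [hT, stmt3aux_tt_delta _ _ _ _ c r (Or.inl hc), Matrix.one_apply]
      by_cases h : r = c
      · simp [h]
      · rw [if_neg (fun hh => h hh.symm), if_neg h, star_zero]
    · have hb1 := r.1.isLt
      have hb2 := c.1.isLt
      rw [stmt3aux_sum_split2 m L (fun k => star (T k r) * T k c)]
      have hz1 : ∑ k : Fin m × Fin L,
          star (T (k.1.castSucc.castSucc, k.2) r) * T (k.1.castSucc.castSucc, k.2) c = 0 := by
        apply Finset.sum_eq_zero
        intro k _
        have hk0 : T (k.1.castSucc.castSucc, k.2) r = 0 := by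
          rw [hT, stmt3aux_tt_delta _ _ _ _ _ r (Or.inl (by simpa using k.1.isLt)), if_neg]
          intro h
          apply hr
          have := congrArg (fun q => ((q.1 : ℕ))) h
          simp only [Fin.coe_castSucc] at this
          have hlt := k.1.isLt
          omega
        rw [hk0, star_zero, zero_mul]
      rw [hz1, zero_add]
      have e1 : ∀ x, T ((Fin.last m).castSucc, x) r
          = Qf (0, x) ((if (r.1:ℕ) = m then 0 else 1), r.2) := by
        intro x
        rw [hT, stmt3aux_tt_Q Qf _ _ (by simp) hr]
        simp
      have e2 : ∀ x, T (Fin.last (m+1), x) r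
          = Qf (1, x) ((if (r.1:ℕ) = m then 0 else 1), r.2) := by
        intro x
        rw [hT, stmt3aux_tt_Q Qf _ _ (by simp) hr]
        simp
      have e1c : ∀ x, T ((Fin.last m).castSucc, x) c
          = Qf (0, x) ((if (c.1:ℕ) = m then 0 else 1), c.2) := by
        intro x
        rw [hT, stmt3aux_tt_Q Qf _ _ (by simp) hc]
        simp
      have e2c : ∀ x, T (Fin.last (m+1), x) c
          = Qf (1, x) ((if (c.1:ℕ) = m then 0 else 1), c.2) := by
        intro x
        rw [hT, stmt3aux_tt_Q Qf _ _ (by simp) hc]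
        simp
      have hQ : (Qfᴴ * Qf) ((if (r.1:ℕ) = m then 0 else 1), r.2)
          ((if (c.1:ℕ) = m then 0 else 1), c.2)
          = (1 : Matrix (Fin 2 × Fin L) (Fin 2 × Fin L) ℂ)
            ((if (r.1:ℕ) = m then 0 else 1), r.2) ((if (c.1:ℕ) = m then 0 else 1), c.2) := by
        rw [hQf]
      rw [Matrix.mul_apply, Fintype.sum_prod_type, Fin.sum_univ_two] at hQ
      simp only [Matrix.conjTranspose_apply] at hQ
      have hsum : (∑ x : Fin L, star (T ((Fin.last m).castSucc, x) r)
            * T ((Fin.last m).castSucc, x) c)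
          + ∑ x : Fin L, star (T (Fin.last (m+1), x) r) * T (Fin.last (m+1), x) c
          = (1 : Matrix (Fin 2 × Fin L) (Fin 2 × Fin L) ℂ)
            ((if (r.1:ℕ) = m then 0 else 1), r.2) ((if (c.1:ℕ) = m then 0 else 1), c.2) := by
        rw [← hQ]
        congr 1
        · apply Finset.sum_congr rfl
          intro x _
          rw [e1 x, e1c x]
        · apply Finset.sum_congr rfl
          intro x _
          rw [e2 x, e2c x]
      rw [hsum]
      have hiff : (((if (r.1:ℕ) = m then (0:Fin 2) else 1), r.2)
          = ((if (c.1:ℕ) = m then (0:Fin 2) else 1), c.2)) ↔ r = c := by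
        constructor
        · intro h
          rw [Prod.mk.injEq] at h
          obtain ⟨h1, h2⟩ := h
          have hv : (r.1:ℕ) = (c.1:ℕ) := by
            by_cases hrm : (r.1:ℕ) = m <;> by_cases hcm : (c.1:ℕ) = m <;>
              simp [hrm, hcm] at h1 ⊢ <;> omega
          exact Prod.ext (Fin.ext hv) h2
        · rintro rfl
          rfl
      rw [Matrix.one_apply, Matrix.one_apply]
      by_cases h : r = c
      · rw [if_pos h, if_pos (hiff.mpr h)]
      · rw [if_neg h, if_neg (fun hh => h (hiff.mp hh))]

end Stmt3Aux2

/-- (Structure of the QR factorizations of the block upper Hessenberg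
matrices.)  Given the QR factorization `Q̄_{j-1} H̄_{j-1} = [R_{j-1}; 0]` of the previous
block Hessenberg matrix, there are unitary transformations `Q_j` (identity outside its
trailing principal `2L×2L` block) and `Q̂_j^(b)` such that
`Q_j · diag(Q̄_{j-1}, I_L) · H̄_j = [R̄_j; 0]` and
`diag(I_{(j-1)L}, Q̂_j^(b)) · Q̄_{j-1} · H_j = R̂_j` with
`R̄_j = [[R_{j-1}, Z_j],[0, N_j]]` and `R̂_j = [[R_{j-1}, Z_j],[0, N̂_j]]` upper
triangular, sharing the same block `Z_j`, and `N_j`, `N̂_j` upper triangular. -/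
theorem stmt3 {n L p : ℕ} (D : BlockArnoldi n L p)
    (Qbar : Matrix (Fin (p+1) × Fin L) (Fin (p+1) × Fin L) ℂ)
    (R : Matrix (Fin p × Fin L) (Fin p × Fin L) ℂ)
    (hQbar_unit : Qbarᴴ * Qbar = 1)
    (hQbar_base : p = 0 → Qbar = 1)
    (hR_ut : utBig R) (hR_inv : IsUnit R)
    (hqr_prev : Qbar * D.Hprev = stackZero R) :
    ∃ (Q11 Q12 Q21 Q22 Qhb : Matrix (Fin L) (Fin L) ℂ)
      (Z : Matrix (Fin p × Fin L) (Fin L) ℂ) (N Nh : Matrix (Fin L) (Fin L) ℂ),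
      (trailingTwo (m := p) Q11 Q12 Q21 Q22)ᴴ * trailingTwo (m := p) Q11 Q12 Q21 Q22 = 1 ∧
      Qhbᴴ * Qhb = 1 ∧
      trailingTwo (m := p) Q11 Q12 Q21 Q22 * (extendOne Qbar * D.Hbar) = threeBlock R Z N 0 ∧
      extendBot (m := p) Qhb * (Qbar * D.Hsq) = twoBlock R Z Nh ∧
      utL N ∧ utL Nh ∧ utBig (twoBlock R Z N) ∧ utBig (twoBlock R Z Nh) := by
  classical
  set M := extendOne Qbar * D.Hbar with hMdef
  have hF1 : ∀ (i : Fin (p+1)) (a : Fin L) (c : Fin (p+1) × Fin L),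
      M (i.castSucc, a) c = (Qbar * D.Hsq) (i, a) c := by
    intro i a c
    rw [hMdef, Matrix.mul_apply, stmt3aux_sum_split (p+1) L
      (fun k => extendOne Qbar (i.castSucc, a) k * D.Hbar k c), Matrix.mul_apply]
    have h2 : ∑ x : Fin L, extendOne Qbar (i.castSucc, a) (Fin.last (p+1), x)
        * D.Hbar (Fin.last (p+1), x) c = 0 := by
      apply Finset.sum_eq_zero
      intro x _
      rw [stmt3aux_extendOne_cl, zero_mul]
    rw [h2, add_zero]
    apply Finset.sum_congr rfl
    rintro ⟨k, b⟩ _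
    rw [stmt3aux_extendOne_cc]
    rfl
  have hF2 : ∀ (a : Fin L) (c : Fin (p+1) × Fin L),
      M (Fin.last (p+1), a) c = D.Hbar (Fin.last (p+1), a) c := by
    intro a c
    rw [hMdef, Matrix.mul_apply, stmt3aux_sum_split (p+1) L
      (fun k => extendOne Qbar (Fin.last (p+1), a) k * D.Hbar k c)]
    have h1 : ∑ k : Fin (p+1) × Fin L, extendOne Qbar (Fin.last (p+1), a)
        (k.1.castSucc, k.2) * D.Hbar (k.1.castSucc, k.2) c = 0 := by
      apply Finset.sum_eq_zero
      rintro ⟨k, b⟩ _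
      rw [stmt3aux_extendOne_lc, zero_mul]
    rw [h1, zero_add]
    have h2 : ∀ x : Fin L, extendOne Qbar (Fin.last (p+1), a) (Fin.last (p+1), x)
        * D.Hbar (Fin.last (p+1), x) c
        = if a = x then D.Hbar (Fin.last (p+1), x) c else 0 := by
      intro x
      rw [stmt3aux_extendOne_ll]
      split <;> simp
    rw [Finset.sum_congr rfl (fun x _ => h2 x),
      Finset.sum_ite_eq Finset.univ a (fun x => D.Hbar (Fin.last (p+1), x) c)]
    simp
  have hF3 : ∀ (r : Fin (p+1) × Fin L) (c' : Fin p) (b : Fin L),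
      (Qbar * D.Hsq) r (c'.castSucc, b) = stackZero R r (c', b) := by
    intro r c' b
    rw [← hqr_prev, Matrix.mul_apply, Matrix.mul_apply]
    apply Finset.sum_congr rfl
    intro k _
    rfl
  set Hh : Matrix (Fin L) (Fin L) ℂ :=
    Matrix.of (fun a b => (Qbar * D.Hsq) (Fin.last p, a) (Fin.last p, b)) with hHh
  set Hs : Matrix (Fin L) (Fin L) ℂ :=
    Matrix.of (fun a b => D.Hbar (Fin.last (p+1), a) (Fin.last p, b)) with hHs
  set Z : Matrix (Fin p × Fin L) (Fin L) ℂ :=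
    Matrix.of (fun rc b => (Qbar * D.Hsq) (rc.1.castSucc, rc.2) (Fin.last p, b)) with hZ
  have hG1 : Qbar * D.Hsq = twoBlock R Z Hh := by
    ext r c
    obtain ⟨i, a⟩ := r
    obtain ⟨ci, b⟩ := c
    by_cases hci : (ci : ℕ) < p
    · have hceq : ((ci, b) : Fin (p+1) × Fin L) = ((⟨(ci:ℕ), hci⟩ : Fin p).castSucc, b) := by
        rw [Prod.mk.injEq]
        exact ⟨Fin.ext (by simp), rfl⟩
      rw [hceq, hF3 (i, a) ⟨(ci:ℕ), hci⟩ b]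
      simp only [stackZero, twoBlock, Matrix.of_apply, Fin.coe_castSucc]
      split_ifs <;> first | rfl | omega
    · have hceq : ci = Fin.last p := Fin.ext (by
        have h2 := ci.isLt
        simp only [Fin.val_last]
        omega)
      rw [hceq]
      simp only [twoBlock, Matrix.of_apply, Fin.val_last]
      by_cases hi : (i : ℕ) < p
      · have hh : ((⟨(i:ℕ), hi⟩ : Fin p).castSucc) = i := Fin.ext rfl
        rw [dif_pos hi, dif_neg (lt_irrefl p), hZ]
        simp only [Matrix.of_apply]
        rw [hh]
      · have hh : i = Fin.last p := Fin.ext (by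
          have h2 := i.isLt
          simp only [Fin.val_last]
          omega)
        rw [dif_neg hi, if_neg (lt_irrefl p), hHh]
        simp only [Matrix.of_apply]
        rw [hh]
  have hM3 : M = threeBlock R Z Hh Hs := by
    ext r c
    obtain ⟨ri, a⟩ := r
    by_cases hri : (ri : ℕ) < p + 1
    · have hre : (ri : Fin (p+2)) = (⟨(ri:ℕ), hri⟩ : Fin (p+1)).castSucc := Fin.ext (by simp)
      rw [hre, hF1 ⟨(ri:ℕ), hri⟩ a c, hG1]
      obtain ⟨ci, b⟩ := c
      simp only [twoBlock, threeBlock, Matrix.of_apply, Fin.coe_castSucc]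
      by_cases h1 : (ri : ℕ) < p
      · rw [dif_pos h1, dif_pos h1]
      · rw [dif_neg h1, dif_neg h1]
        by_cases hci : (ci : ℕ) < p
        · rw [if_pos hci, if_pos hci]
        · rw [if_neg hci, if_neg hci, if_pos (by omega : (ri:ℕ) = p)]
    · have hre : ri = Fin.last (p+1) := Fin.ext (by
        have h2 := ri.isLt
        simp only [Fin.val_last]
        omega)
      rw [hre, hF2 a c]
      obtain ⟨ci, b⟩ := c
      simp only [threeBlock, Matrix.of_apply, Fin.val_last]
      rw [dif_neg (by omega : ¬ (p + 1 < p))]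
      by_cases hci : (ci : ℕ) < p
      · rw [if_pos hci]
        exact D.hess _ _ (by simp only [Fin.val_last]; omega)
      · rw [if_neg hci, if_neg (by omega : ¬ (p + 1 = p))]
        have hceq : ci = Fin.last p := Fin.ext (by
          have h2 := ci.isLt
          simp only [Fin.val_last]
          omega)
        rw [hceq, hHs]
        rfl
  have hMmid : ∀ (x : Fin L) (c : Fin (p+1) × Fin L),
      M ((Fin.last p).castSucc, x) c = if (c.1 : ℕ) < p then 0 else Hh x c.2 := by
    intro x c
    obtain ⟨ci, b⟩ := c
    rw [hM3]
    simp only [threeBlock, Matrix.of_apply, Fin.coe_castSucc, Fin.val_last]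
    rw [dif_neg (lt_irrefl p)]
    by_cases hci : (ci : ℕ) < p
    · rw [if_pos hci, if_pos hci]
    · rw [if_neg hci, if_neg hci]
      simp
  have hMbot : ∀ (x : Fin L) (c : Fin (p+1) × Fin L),
      M (Fin.last (p+1), x) c = if (c.1 : ℕ) < p then 0 else Hs x c.2 := by
    intro x c
    obtain ⟨ci, b⟩ := c
    rw [hM3]
    simp only [threeBlock, Matrix.of_apply, Fin.val_last]
    rw [dif_neg (by omega : ¬ (p + 1 < p))]
    by_cases hci : (ci : ℕ) < p
    · rw [if_pos hci, if_pos hci]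
    · rw [if_neg hci, if_neg hci, if_neg (by omega : ¬ (p + 1 = p))]
  set V : Matrix (Fin 2 × Fin L) (Fin L) ℂ :=
    Matrix.of (fun k b => if k.1 = (0 : Fin 2) then Hh k.2 b else Hs k.2 b) with hV
  obtain ⟨Qf, hQf_unit, hQf_tri, hQf_bot⟩ := stmt3aux_qr_trailing L V
  obtain ⟨Qhb, hQhb_unit, hQhb_tri⟩ := stmt3aux_qr_square L Hh
  set N : Matrix (Fin L) (Fin L) ℂ :=
    Matrix.of (fun a b => (Qf * V) ((0 : Fin 2), a) b) with hN
  have hQV : ∀ (i : Fin 2) (a b : Fin L), (Qf * V) (i, a) b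
      = (∑ x, Qf (i, a) ((0 : Fin 2), x) * Hh x b)
        + ∑ x, Qf (i, a) ((1 : Fin 2), x) * Hs x b := by
    intro i a b
    rw [Matrix.mul_apply, Fintype.sum_prod_type, Fin.sum_univ_two]
    simp [hV]
  have hutN : utL N := by
    intro a b h
    rw [hN]
    exact hQf_tri a b h
  have hutNh : utL (Qhb * Hh) := fun a b h => hQhb_tri a b h
  refine ⟨Matrix.of (fun x y => Qf (0,x) (0,y)), Matrix.of (fun x y => Qf (0,x) (1,y)),
    Matrix.of (fun x y => Qf (1,x) (0,y)), Matrix.of (fun x y => Qf (1,x) (1,y)),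
    Qhb, Z, N, Qhb * Hh, stmt3aux_tt_unit Qf hQf_unit, hQhb_unit, ?_, ?_, hutN, hutNh,
    stmt3aux_utBig_twoBlock Z hR_ut hutN, stmt3aux_utBig_twoBlock Z hR_ut hutNh⟩
  · -- T * M = threeBlock R Z N 0
    set T := trailingTwo (m := p) (Matrix.of fun x y => Qf (0,x) (0,y))
      (Matrix.of fun x y => Qf (0,x) (1,y)) (Matrix.of fun x y => Qf (1,x) (0,y))
      (Matrix.of fun x y => Qf (1,x) (1,y)) with hT
    ext r c
    obtain ⟨ri, a⟩ := r
    obtain ⟨ci, b⟩ := c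
    rw [Matrix.mul_apply]
    by_cases hri : (ri : ℕ) < p
    · have hstep : ∑ k, T (ri, a) k * M k (ci, b)
          = ∑ k, if (ri, a) = k then M k (ci, b) else 0 := by
        apply Finset.sum_congr rfl
        intro k _
        rw [hT, stmt3aux_tt_delta _ _ _ _ _ k (Or.inl hri)]
        by_cases h : ((ri, a) : Fin (p+2) × Fin L) = k
        · rw [if_pos h, if_pos h, one_mul]
        · rw [if_neg h, if_neg h, zero_mul]
      rw [hstep, Finset.sum_ite_eq Finset.univ ((ri, a) : Fin (p+2) × Fin L)
        (fun k => M k (ci, b))]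
      simp only [Finset.mem_univ, if_true]
      rw [hM3]
      simp only [threeBlock, Matrix.of_apply]
      rw [dif_pos hri, dif_pos hri]
    · rw [stmt3aux_sum_split2 p L (fun k => T (ri, a) k * M k (ci, b))]
      have hz : ∑ k : Fin p × Fin L, T (ri, a) (k.1.castSucc.castSucc, k.2)
          * M (k.1.castSucc.castSucc, k.2) (ci, b) = 0 := by
        apply Finset.sum_eq_zero
        intro k _
        have h0 : T (ri, a) (k.1.castSucc.castSucc, k.2) = 0 := by
          rw [hT, stmt3aux_tt_delta _ _ _ _ _ _ (Or.inr (by simpa using k.1.isLt)), if_neg]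
          intro h
          have h2 := congrArg (fun q : Fin (p+2) × Fin L => ((q.1 : ℕ))) h
          simp only [Fin.coe_castSucc] at h2
          have h3 := k.1.isLt
          omega
        rw [h0, zero_mul]
      rw [hz, zero_add]
      have eT1 : ∀ x, T (ri, a) ((Fin.last p).castSucc, x)
          = Qf ((if (ri:ℕ) = p then 0 else 1), a) ((0 : Fin 2), x) := by
        intro x
        rw [hT, stmt3aux_tt_Q Qf _ _ hri (by simp)]
        simp
      have eT2 : ∀ x, T (ri, a) (Fin.last (p+1), x)
          = Qf ((if (ri:ℕ) = p then 0 else 1), a) ((1 : Fin 2), x) := by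
        intro x
        rw [hT, stmt3aux_tt_Q Qf _ _ hri (by simp)]
        simp
      by_cases hci : (ci : ℕ) < p
      · have hz2 : (∑ x, T (ri, a) ((Fin.last p).castSucc, x)
              * M ((Fin.last p).castSucc, x) (ci, b))
            + ∑ x, T (ri, a) (Fin.last (p+1), x) * M (Fin.last (p+1), x) (ci, b) = 0 := by
          rw [Finset.sum_eq_zero (fun x _ => by rw [hMmid]; simp [hci]),
            Finset.sum_eq_zero (fun x _ => by rw [hMbot]; simp [hci]), add_zero]
        rw [hz2]
        simp only [threeBlock, Matrix.of_apply]
        rw [dif_neg hri, if_pos hci]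
      · have m1 : ∀ x, M ((Fin.last p).castSucc, x) (ci, b) = Hh x b := by
          intro x
          rw [hMmid]
          simp [hci]
        have m2 : ∀ x, M (Fin.last (p+1), x) (ci, b) = Hs x b := by
          intro x
          rw [hMbot]
          simp [hci]
        have hsum : (∑ x, T (ri, a) ((Fin.last p).castSucc, x)
              * M ((Fin.last p).castSucc, x) (ci, b))
            + ∑ x, T (ri, a) (Fin.last (p+1), x) * M (Fin.last (p+1), x) (ci, b)
            = (Qf * V) ((if (ri:ℕ) = p then 0 else 1), a) b := by
          rw [hQV]
          congr 1
          · apply Finset.sum_congr rfl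
            intro x _
            rw [eT1 x, m1 x]
          · apply Finset.sum_congr rfl
            intro x _
            rw [eT2 x, m2 x]
        rw [hsum]
        simp only [threeBlock, Matrix.of_apply]
        rw [dif_neg hri, if_neg hci]
        by_cases hp : (ri : ℕ) = p
        · rw [if_pos hp, if_pos hp, hN]
          rfl
        · rw [if_neg hp, if_neg hp]
          exact (hQf_bot a b).trans (Matrix.zero_apply a b).symm
  · -- extendBot
    rw [hG1]
    ext r c
    obtain ⟨ri, a⟩ := r
    obtain ⟨ci, b⟩ := c
    rw [Matrix.mul_apply]
    by_cases hri : (ri : ℕ) < p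
    · have hstep : ∑ k, extendBot (m := p) Qhb (ri, a) k * twoBlock R Z Hh k (ci, b)
          = ∑ k, if (ri, a) = k then twoBlock R Z Hh k (ci, b) else 0 := by
        apply Finset.sum_congr rfl
        intro k _
        have h0 : extendBot (m := p) Qhb (ri, a) k = if (ri, a) = k then 1 else 0 := by
          simp only [extendBot, Matrix.of_apply]
          rw [if_pos (Or.inl hri)]
        rw [h0]
        by_cases h : ((ri, a) : Fin (p+1) × Fin L) = k
        · rw [if_pos h, if_pos h, one_mul]
        · rw [if_neg h, if_neg h, zero_mul]
      rw [hstep, Finset.sum_ite_eq Finset.univ ((ri, a) : Fin (p+1) × Fin L)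
        (fun k => twoBlock R Z Hh k (ci, b))]
      simp only [Finset.mem_univ, if_true]
      simp only [twoBlock, Matrix.of_apply]
      rw [dif_pos hri, dif_pos hri]
    · rw [stmt3aux_sum_split p L
        (fun k => extendBot (m := p) Qhb (ri, a) k * twoBlock R Z Hh k (ci, b))]
      have hz : ∑ k : Fin p × Fin L, extendBot (m := p) Qhb (ri, a) (k.1.castSucc, k.2)
          * twoBlock R Z Hh (k.1.castSucc, k.2) (ci, b) = 0 := by
        apply Finset.sum_eq_zero
        intro k _
        have h0 : extendBot (m := p) Qhb (ri, a) (k.1.castSucc, k.2) = 0 := by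
          simp only [extendBot, Matrix.of_apply]
          rw [if_pos (Or.inr (by simpa using k.1.isLt)), if_neg]
          intro h
          have h2 := congrArg (fun q : Fin (p+1) × Fin L => ((q.1 : ℕ))) h
          simp only [Fin.coe_castSucc] at h2
          have h3 := k.1.isLt
          omega
        rw [h0, zero_mul]
      rw [hz, zero_add]
      have hlast : ∀ x, extendBot (m := p) Qhb (ri, a) (Fin.last p, x) = Qhb a x := by
        intro x
        simp only [extendBot, Matrix.of_apply, Fin.val_last]
        rw [if_neg]
        intro h
        rcases h with h | h
        · exact hri h
        · exact lt_irrefl p h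
      have htb : ∀ x, twoBlock R Z Hh (Fin.last p, x) (ci, b)
          = if (ci : ℕ) < p then 0 else Hh x b := by
        intro x
        simp only [twoBlock, Matrix.of_apply, Fin.val_last]
        rw [dif_neg (lt_irrefl p)]
      by_cases hci : (ci : ℕ) < p
      · rw [Finset.sum_eq_zero (fun x _ => by rw [htb x, if_pos hci, mul_zero])]
        simp only [twoBlock, Matrix.of_apply]
        rw [dif_neg hri, if_pos hci]
      · have hstep : ∑ x, extendBot (m := p) Qhb (ri, a) (Fin.last p, x)
            * twoBlock R Z Hh (Fin.last p, x) (ci, b) = ∑ x, Qhb a x * Hh x b := by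
          apply Finset.sum_congr rfl
          intro x _
          rw [hlast x, htb x, if_neg hci]
        rw [hstep, ← Matrix.mul_apply]
        simp only [twoBlock, Matrix.of_apply]
        rw [dif_neg hri, if_neg hci]


end
end

section
/- Assume the block setup and QR setup. Then rank C̃_j = rank F_{j−1}^{(G)}; in particular, if F_{j−1}^{(G)} has rank L, then C̃_j is invertible. -/
open Matrix

noncomputable section

set_option maxHeartbeats 1000000

section AuxLemmas

variable {m L : ℕ} {col : Type*}

lemma sum_split {α : Type*} [AddCommMonoid α] (f : Fin (m+1) × Fin L → α) :
    ∑ r, f r = (∑ i : Fin m, ∑ l, f (Fin.castSucc i, l)) + ∑ l, f (Fin.last m, l) := by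
  rw [Fintype.sum_prod_type, Fin.sum_univ_castSucc]

lemma frobSq_nonneg {a b : Type*} [Fintype a] [Fintype b] (M : Matrix a b ℂ) :
    0 ≤ frobSq M :=
  Finset.sum_nonneg fun _ _ => Finset.sum_nonneg fun _ _ => Complex.normSq_nonneg _

lemma frobSq_eq_zero {a b : Type*} [Fintype a] [Fintype b] {M : Matrix a b ℂ}
    (h : frobSq M ≤ 0) : M = 0 := by
  have h0 : frobSq M = 0 := le_antisymm h (frobSq_nonneg M)
  ext r c
  have h1 := (Finset.sum_eq_zero_iff_of_nonneg
    (fun r _ => Finset.sum_nonneg fun c _ => Complex.normSq_nonneg (M r c))).mp h0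
    r (Finset.mem_univ r)
  have h2 := (Finset.sum_eq_zero_iff_of_nonneg
    (fun c _ => Complex.normSq_nonneg (M r c))).mp h1 c (Finset.mem_univ c)
  simp only [Matrix.zero_apply]
  exact Complex.normSq_eq_zero.mp h2

lemma frobSq_eq_re_trace {a b : Type*} [Fintype a] [Fintype b] (M : Matrix a b ℂ) :
    frobSq M = (Matrix.trace (Mᴴ * M)).re := by
  have : Matrix.trace (Mᴴ * M) = ((frobSq M : ℝ) : ℂ) := by
    simp only [Matrix.trace, Matrix.diag, Matrix.mul_apply, Matrix.conjTranspose_apply,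
      frobSq]
    push_cast
    rw [Finset.sum_comm]
    refine Finset.sum_congr rfl fun r _ => Finset.sum_congr rfl fun c _ => ?_
    rw [show star (M r c) = (starRingEnd ℂ) (M r c) from congrFun Complex.star_def _,
      ← Complex.normSq_eq_conj_mul_self]
  rw [this, Complex.ofReal_re]

lemma frobSq_unitary {q a b : Type*} [Fintype q] [Fintype a] [Fintype b] [DecidableEq a]
    (U : Matrix q a ℂ) (hU : Uᴴ * U = 1) (M : Matrix a b ℂ) :
    frobSq (U * M) = frobSq M := by
  rw [frobSq_eq_re_trace, frobSq_eq_re_trace M, Matrix.conjTranspose_mul,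
    Matrix.mul_assoc, ← Matrix.mul_assoc Uᴴ, hU, Matrix.one_mul]

lemma rank_unitary {q a b : Type*} [Fintype q] [Fintype a] [Fintype b] [DecidableEq a]
    (U : Matrix q a ℂ) (hU : Uᴴ * U = 1) (M : Matrix a b ℂ) :
    (U * M).rank = M.rank := by
  refine le_antisymm (Matrix.rank_mul_le_right U M) ?_
  calc M.rank = ((Uᴴ * U) * M).rank := by rw [hU, Matrix.one_mul]
    _ = (Uᴴ * (U * M)).rank := by rw [Matrix.mul_assoc]
    _ ≤ (U * M).rank := Matrix.rank_mul_le_right _ _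

lemma vcat_apply_lt (T : Matrix (Fin m × Fin L) col ℂ) (Bo : Matrix (Fin L) col ℂ)
    (i : Fin m) (l : Fin L) (c : col) :
    vcat T Bo (Fin.castSucc i, l) c = T (i, l) c := by
  have h : ((Fin.castSucc i : Fin (m+1)) : ℕ) < m := i.is_lt
  simp only [vcat, Matrix.of_apply, dif_pos h, Fin.coe_castSucc, Fin.eta, dif_pos i.is_lt]

lemma vcat_apply_last (T : Matrix (Fin m × Fin L) col ℂ) (Bo : Matrix (Fin L) col ℂ)
    (l : Fin L) (c : col) :
    vcat T Bo (Fin.last m, l) c = Bo l c := by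
  simp only [vcat, Matrix.of_apply, Fin.val_last, dif_neg (lt_irrefl m)]

lemma vcat_sub (T T' : Matrix (Fin m × Fin L) col ℂ) (B B' : Matrix (Fin L) col ℂ) :
    vcat T B - vcat T' B' = vcat (T - T') (B - B') := by
  ext ⟨i, l⟩ c
  rcases Fin.eq_castSucc_or_eq_last i with ⟨j, rfl⟩ | rfl
  · simp [vcat_apply_lt, Matrix.sub_apply]
  · simp [vcat_apply_last, Matrix.sub_apply]

lemma eq_vcat (M : Matrix (Fin (m+1) × Fin L) col ℂ) :
    M = vcat (M.submatrix (Prod.map Fin.castSucc id) id)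
             (M.submatrix (fun l => (Fin.last m, l)) id) := by
  ext ⟨i, l⟩ c
  rcases Fin.eq_castSucc_or_eq_last i with ⟨j, rfl⟩ | rfl
  · rw [vcat_apply_lt]; rfl
  · rw [vcat_apply_last]; rfl

lemma frobSq_vcat [Fintype col] (T : Matrix (Fin m × Fin L) col ℂ)
    (Bo : Matrix (Fin L) col ℂ) :
    frobSq (vcat T Bo) = frobSq T + frobSq Bo := by
  show (∑ r, ∑ c, Complex.normSq (vcat T Bo r c)) = _
  rw [sum_split (f := fun r => ∑ c, Complex.normSq (vcat T Bo r c))]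
  congr 1
  · rw [frobSq, Fintype.sum_prod_type]
    refine Finset.sum_congr rfl fun i _ => Finset.sum_congr rfl fun l _ =>
      Finset.sum_congr rfl fun c _ => ?_
    rw [vcat_apply_lt]
  · refine Finset.sum_congr rfl fun l _ => Finset.sum_congr rfl fun c _ => ?_
    rw [vcat_apply_last]

lemma stackZero_mul (R : Matrix (Fin m × Fin L) (Fin m × Fin L) ℂ)
    (Y : Matrix (Fin m × Fin L) (Fin L) ℂ) :
    stackZero R * Y = vcat (R * Y) 0 := by
  ext ⟨i, l⟩ c
  rcases Fin.eq_castSucc_or_eq_last i with ⟨j, rfl⟩ | rfl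
  · rw [vcat_apply_lt, Matrix.mul_apply, Matrix.mul_apply]
    refine Finset.sum_congr rfl fun k _ => ?_
    have h : ((Fin.castSucc j : Fin (m+1)) : ℕ) < m := j.is_lt
    simp only [stackZero, Matrix.of_apply, dif_pos h, Fin.coe_castSucc, Fin.eta, dif_pos j.is_lt]
  · rw [vcat_apply_last, Matrix.mul_apply]
    simp [stackZero]

lemma conjT_vcat_zero_mul (C : Matrix (Fin L) (Fin L) ℂ) :
    (vcat (0 : Matrix (Fin m × Fin L) (Fin L) ℂ) C)ᴴ * vcat (0 : Matrix (Fin m × Fin L) (Fin L) ℂ) C = Cᴴ * C := by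
  ext a b
  rw [Matrix.mul_apply, Matrix.mul_apply,
    sum_split (f := fun r => (vcat (0 : Matrix (Fin m × Fin L) (Fin L) ℂ) C)ᴴ a r *
      vcat 0 C r b)]
  simp only [Matrix.conjTranspose_apply, vcat_apply_lt, vcat_apply_last,
    Matrix.zero_apply, map_zero, zero_mul, Finset.sum_const_zero, mul_zero, zero_add]

open ComplexOrder in
lemma rank_vcat_zero (C : Matrix (Fin L) (Fin L) ℂ) :
    (vcat (0 : Matrix (Fin m × Fin L) (Fin L) ℂ) C).rank = C.rank := by
  rw [← Matrix.rank_conjTranspose_mul_self (vcat 0 C), conjT_vcat_zero_mul,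
    Matrix.rank_conjTranspose_mul_self]

end AuxLemmas

/-- `rank C̃_j = rank F_{j-1}^(G)`; in particular, if the previous
block GMRES residual has full rank `L`, then `C̃_j` is invertible. -/
theorem stmt4 {n L p : ℕ} (D : BlockArnoldi n L p) (S : QRSetup L p D.Hbar D.S0)
    (Yprev : Matrix (Fin p × Fin L) (Fin L) ℂ) (hYprev : IsBlockGMRESprev D Yprev) :
    S.Ct.rank = (D.B - D.A * (D.X0 + D.Wprev * Yprev)).rank ∧
    ((D.B - D.A * (D.X0 + D.Wprev * Yprev)).rank = L → IsUnit S.Ct) := by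
  classical
  set ELS0 := EL (p+1) L * D.S0 with hELS0def
  set T' : Matrix (Fin p × Fin L) (Fin L) ℂ :=
    (S.Qbar * ELS0).submatrix (Prod.map Fin.castSucc id) id with hT'def
  have hCt : (S.Qbar * ELS0).submatrix (fun l : Fin L => (Fin.last p, l)) id = S.Ct := rfl
  have hQE : S.Qbar * ELS0 = vcat T' S.Ct := by
    rw [← hCt]; exact eq_vcat _
  have hQH : ∀ Y : Matrix (Fin p × Fin L) (Fin L) ℂ,
      S.Qbar * (D.Hprev * Y) = vcat (S.R * Y) 0 := by
    intro Y
    rw [← Matrix.mul_assoc]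
    have : S.Qbar * D.Hprev = stackZero S.R := S.qr_prev
    rw [this, stackZero_mul]
  have key : ∀ Y : Matrix (Fin p × Fin L) (Fin L) ℂ,
      frobSq (D.Hprev * Y - ELS0) = frobSq (S.R * Y - T') + frobSq S.Ct := by
    intro Y
    rw [← frobSq_unitary S.Qbar S.Qbar_unit, Matrix.mul_sub, hQE, hQH, vcat_sub,
      frobSq_vcat]
    congr 1
    simp [frobSq, Complex.normSq]
  -- the optimal Y satisfies R * Y = T'
  have hRY : S.R * Yprev = T' := by
    obtain ⟨u, hu⟩ := S.R_inv
    set Ystar : Matrix (Fin p × Fin L) (Fin L) ℂ := (↑u⁻¹ : Matrix (Fin p × Fin L) (Fin p × Fin L) ℂ) * T'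
      with hYstar
    have hstar : S.R * Ystar = T' := by
      rw [hYstar, ← Matrix.mul_assoc]
      have h1 : S.R * (↑u⁻¹ : Matrix (Fin p × Fin L) (Fin p × Fin L) ℂ) = 1 := by
        rw [← hu]; exact u.mul_inv
      rw [h1, Matrix.one_mul]
    have h1 : frobSq (D.Hprev * Yprev - ELS0) ≤ frobSq (D.Hprev * Ystar - ELS0) := hYprev.1 Ystar
    rw [key Yprev, key Ystar, hstar, sub_self] at h1
    have h0 : frobSq (0 : Matrix (Fin p × Fin L) (Fin L) ℂ) = 0 := by simp [frobSq]
    have h2 : frobSq (S.R * Yprev - T') ≤ 0 := by rw [h0] at h1; linarith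
    have := frobSq_eq_zero h2
    exact sub_eq_zero.mp this
  have hQM : S.Qbar * (ELS0 - D.Hprev * Yprev) = vcat 0 S.Ct := by
    rw [Matrix.mul_sub, hQE, hQH, vcat_sub, hRY, sub_self, sub_zero]
  -- orthonormality of Wfull
  have hWorth : D.Wfullᴴ * D.Wfull = 1 := by
    ext a b
    have h : (D.Wᴴ * D.W) (Prod.map Fin.castSucc id a) (Prod.map Fin.castSucc id b)
        = (1 : Matrix (Fin (p+2) × Fin L) (Fin (p+2) × Fin L) ℂ)
          (Prod.map Fin.castSucc id a) (Prod.map Fin.castSucc id b) := by rw [D.orth]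
    calc (D.Wfullᴴ * D.Wfull) a b
        = (D.Wᴴ * D.W) (Prod.map Fin.castSucc id a) (Prod.map Fin.castSucc id b) := by
          simp [Matrix.mul_apply, Matrix.conjTranspose_apply, BlockArnoldi.Wfull]
      _ = (1 : Matrix (Fin (p+2) × Fin L) (Fin (p+2) × Fin L) ℂ)
          (Prod.map Fin.castSucc id a) (Prod.map Fin.castSucc id b) := h
      _ = (1 : Matrix (Fin (p+1) × Fin L) (Fin (p+1) × Fin L) ℂ) a b := by
          simp only [Matrix.one_apply]
          by_cases hab : a = b
          · simp [hab]
          · rw [if_neg, if_neg hab]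
            intro hco
            have h1 : Fin.castSucc a.1 = Fin.castSucc b.1 := congrArg Prod.fst hco
            have h2 : a.2 = b.2 := congrArg (Prod.snd : Fin (p+2) × Fin L → Fin L) hco
            exact hab (Prod.ext_iff.mpr ⟨Fin.castSucc_injective _ h1, h2⟩)
  -- F0 = Wfull * ELS0
  have hELW : D.Wfull * EL (p+1) L
      = D.W.submatrix id (fun c : Fin L => ((0 : Fin (p+2)), c)) := by
    ext r c
    rw [Matrix.mul_apply, Finset.sum_eq_single ((0 : Fin (p+1)), c)]
    · have h1 : EL (p+1) L ((0 : Fin (p+1)), c) c = 1 := by simp [EL]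
      rw [h1, mul_one]
      simp [BlockArnoldi.Wfull]
    · intro k _ hk
      have : EL (p+1) L k c = 0 := by
        simp only [EL, Matrix.of_apply]
        rw [if_neg]
        rintro ⟨h1, h2⟩
        exact hk (Prod.ext (Fin.ext (by simpa using h1)) h2)
      rw [this, mul_zero]
    · intro h; exact absurd (Finset.mem_univ _) h
  have hF0rew : D.B - D.A * D.X0 = D.Wfull * ELS0 := by
    rw [D.F0_eq, hELS0def, ← Matrix.mul_assoc, hELW]
  -- A * Wprev = Wfull * Hprev
  have harn : D.A * D.Wfull = D.W * D.Hbar := D.arnoldi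
  have hWprev : D.Wprev = D.Wfull.submatrix id (Prod.map Fin.castSucc id) := rfl
  have hAWprev : D.A * D.Wprev = D.Wfull * D.Hprev := by
    calc D.A * D.Wprev = (D.A * D.Wfull).submatrix id (Prod.map Fin.castSucc id) := by
          rw [hWprev]; ext r c; simp [Matrix.mul_apply]
      _ = (D.W * D.Hbar).submatrix id (Prod.map Fin.castSucc id) := by rw [harn]
      _ = D.Wfull * D.Hprev := by
          ext r c
          rw [Matrix.submatrix_apply, Matrix.mul_apply, Matrix.mul_apply]
          erw [sum_split (m := p+1) (L := L)
            (f := fun k => D.W r k * D.Hbar k (Prod.map Fin.castSucc id c))]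
          rw [Fintype.sum_prod_type]
          have hz : ∀ l : Fin L,
              D.Hbar (Fin.last (p+1), l) (Prod.map Fin.castSucc id c) = 0 := by
            intro l
            apply D.hess
            have := c.1.is_lt
            simp only [Fin.val_last, Fin.coe_castSucc, Prod.map_fst, id]
            omega
          simp [hz, BlockArnoldi.Wfull, BlockArnoldi.Hprev]
  have hF : D.B - D.A * (D.X0 + D.Wprev * Yprev)
      = D.Wfull * (ELS0 - D.Hprev * Yprev) := by
    rw [Matrix.mul_add, ← sub_sub, hF0rew, ← Matrix.mul_assoc D.A D.Wprev Yprev,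
      hAWprev, Matrix.mul_assoc D.Wfull D.Hprev Yprev, ← Matrix.mul_sub]
  have hrank : S.Ct.rank = (D.B - D.A * (D.X0 + D.Wprev * Yprev)).rank := by
    rw [hF, rank_unitary D.Wfull hWorth, ← rank_unitary S.Qbar S.Qbar_unit, hQM,
      rank_vcat_zero]
  refine ⟨hrank, fun hL => ?_⟩
  have hCtrank : S.Ct.rank = L := hrank.trans hL
  have hrange : LinearMap.range S.Ct.mulVecLin = ⊤ := by
    apply Submodule.eq_top_of_finrank_eq
    have h2 : Module.finrank ℂ (Fin L → ℂ) = L := Module.finrank_fin_fun ℂ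
    rw [h2]
    exact hCtrank
  have hsurj : Function.Surjective S.Ct.mulVec := by
    intro v
    obtain ⟨w, hw⟩ := LinearMap.range_eq_top.mp hrange v
    exact ⟨w, hw⟩
  exact Matrix.mulVec_surjective_iff_isUnit.mp hsurj

end
end

section
/- Assume the block setup and QR setup. Then: (i) rank Ĉ_j = rank C̃_j; (ii) rank C_j ≤ min{rank Q_j^{(11)}, rank C̃_j}; (iii) if C̃_j is invertible (which holds when F_{j−1}^{(G)} has rank L), then Ĉ_j is invertible and C_j is singular if and only if Q_j^{(11)} is singular. -/
open Matrix

noncomputable section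

set_option maxHeartbeats 1000000

/-- (i) `rank Ĉ_j = rank C̃_j`; (ii) `rank C_j ≤ min {rank Q_j^(11),
rank C̃_j}`; (iii) if `C̃_j` is invertible then `Ĉ_j` is invertible and `C_j` is
singular iff `Q_j^(11)` is singular. -/
theorem stmt5 {n L p : ℕ} (D : BlockArnoldi n L p) (S : QRSetup L p D.Hbar D.S0) :
    S.Chat.rank = S.Ct.rank ∧
    S.C.rank ≤ min S.Q11.rank S.Ct.rank ∧
    (IsUnit S.Ct → (IsUnit S.Chat ∧ (¬ IsUnit S.C ↔ ¬ IsUnit S.Q11))) := by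
  have hQhatb : IsUnit S.Qhatb := by
    have := S.Qhatb_unit
    exact IsUnit.of_mul_eq_one _ ((mul_eq_one_comm).mp this)
  have hChat : S.Chat = S.Qhatb * S.Ct := rfl
  have hC : S.C = S.Q11 * S.Ct := rfl
  refine ⟨?_, ?_, ?_⟩
  · rw [hChat, Matrix.rank_mul_eq_right_of_isUnit_det _ _
      ((Matrix.isUnit_iff_isUnit_det _).mp hQhatb)]
  · exact Matrix.rank_mul_le _ _
  · intro hCt
    refine ⟨hQhatb.mul hCt, ?_⟩
    constructor
    · intro h hQ
      exact h (hQ.mul hCt)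
    · intro h hCunit
      apply h
      have : S.Q11 = S.C * (S.Ct⁻¹) := by
        rw [hC, Matrix.mul_assoc, Matrix.mul_nonsing_inv _
          ((Matrix.isUnit_iff_isUnit_det _).mp hCt), Matrix.mul_one]
      rw [this]
      exact hCunit.mul ((Matrix.isUnit_nonsing_inv_iff).mpr hCt)

end
end
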